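/- arXiv:1512.04174 — 7 statements merged into one kernel-verified Lean document; each statement's English description precedes it below -/
import Mathlib

section
/- Let A(x) = (a_{ij}(x)) be an m×n matrix whose entries are real homogeneous polynomials of degree 2p in x ∈ ℝ^d. If the rank of A(x) is at most 1 for every x ∈ ℝ^d, then there exist homogeneous polynomials b_1,…,b_m and c_1,…,c_n such that a_{ij}(x) = b_i(x)·c_j(x) for all i, j. -/
open MvPolynomial

noncomputable def homPoly {σ : Type*} {R : Type*} [CommSemiring R] (f : MvPolynomial σ R) :
    Polynomial (MvPolynomial σ R) :=
  MvPolynomial.aeval (fun i => Polynomial.X * Polynomial.C (MvPolynomial.X i)) f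

lemma homPoly_monomial {σ R : Type*} [CommSemiring R] (d : σ →₀ ℕ) (r : R) :
    homPoly (monomial d r) = Polynomial.C (monomial d r) * Polynomial.X ^ d.degree := by
  unfold homPoly
  rw [aeval_monomial]
  have h1 : (Finsupp.prod d fun i k => (Polynomial.X * Polynomial.C (MvPolynomial.X (R := R) i)) ^ k)
      = Polynomial.C (Finsupp.prod d fun i k => (MvPolynomial.X (R := R) i) ^ k) * Polynomial.X ^ d.degree := by
    rw [Finsupp.prod, Finsupp.prod, Finsupp.degree_apply]
    simp_rw [mul_pow, ← Polynomial.C_pow]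
    rw [Finset.prod_mul_distrib, map_prod, Finset.prod_pow_eq_pow_sum]
    ring
  rw [h1, monomial_eq, map_mul]
  have : algebraMap R (Polynomial (MvPolynomial σ R)) r = Polynomial.C (MvPolynomial.C r) := rfl
  rw [this]
  ring

lemma coeff_homPoly {σ R : Type*} [CommSemiring R] (f : MvPolynomial σ R) (k : ℕ) :
    (homPoly f).coeff k = homogeneousComponent k f := by
  induction f using MvPolynomial.induction_on' with
  | monomial d r =>
    classical
    rw [homPoly_monomial]
    ext e
    rw [Polynomial.coeff_C_mul, Polynomial.coeff_X_pow, coeff_homogeneousComponent]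
    split_ifs with h1 h2 h2
    · rw [mul_one]
    · rw [mul_one, coeff_monomial, if_neg]; rintro rfl; exact h2 h1.symm
    · rw [mul_zero, coeff_zero, eq_comm, coeff_monomial, if_neg]; rintro rfl; exact h1 h2.symm
    · rw [mul_zero]; rfl
  | add p q hp hq =>
    unfold homPoly at *
    rw [map_add, Polynomial.coeff_add, map_add, hp, hq]

lemma homPoly_ne_zero {σ R : Type*} [CommSemiring R] {f : MvPolynomial σ R} (hf : f ≠ 0) :
    homPoly f ≠ 0 := by
  intro h
  apply hf
  rw [← sum_homogeneousComponent f]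
  apply Finset.sum_eq_zero
  intro i _
  rw [← coeff_homPoly, h, Polynomial.coeff_zero]

lemma factor_homog {σ : Type*} (f g : MvPolynomial σ ℝ) (N : ℕ)
    (h : (f * g).IsHomogeneous N) (h0 : f * g ≠ 0) : ∃ k, g.IsHomogeneous k := by
  have hf : f ≠ 0 := left_ne_zero_of_mul h0
  have hg : g ≠ 0 := right_ne_zero_of_mul h0
  have hF : homPoly f ≠ 0 := homPoly_ne_zero hf
  have hG : homPoly g ≠ 0 := homPoly_ne_zero hg
  have hFG : homPoly f * homPoly g = homPoly (f * g) := (map_mul _ _ _).symm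
  have hco : ∀ j : ℕ, j ≠ N → (homPoly (f * g)).coeff j = 0 := by
    intro j hj
    rw [coeff_homPoly]
    rw [homogeneousComponent_of_mem h, if_neg hj]
  have hcoN : (homPoly (f * g)).coeff N = f * g := by
    rw [coeff_homPoly, homogeneousComponent_of_mem h,
      if_pos rfl]
  have hdeg : (homPoly (f * g)).natDegree = N := by
    apply le_antisymm
    · apply Polynomial.natDegree_le_iff_coeff_eq_zero.mpr
      intro j hj
      exact hco j (by omega)
    · exact Polynomial.le_natDegree_of_ne_zero (by rw [hcoN]; exact h0)
  have htr : (homPoly (f * g)).natTrailingDegree = N := by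
    apply le_antisymm
    · exact Polynomial.natTrailingDegree_le_of_ne_zero (by rw [hcoN]; exact h0)
    · apply Polynomial.le_natTrailingDegree (homPoly_ne_zero h0)
      intro j hj
      exact hco j (by omega)
  rw [← hFG, Polynomial.natDegree_mul hF hG] at hdeg
  rw [← hFG, Polynomial.natTrailingDegree_mul hF hG] at htr
  have h1 : (homPoly f).natTrailingDegree ≤ (homPoly f).natDegree :=
    Polynomial.natTrailingDegree_le_natDegree _
  have h2 : (homPoly g).natTrailingDegree ≤ (homPoly g).natDegree :=
    Polynomial.natTrailingDegree_le_natDegree _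
  set k := (homPoly g).natDegree with hk
  have hk2 : (homPoly g).natTrailingDegree = k := by omega
  refine ⟨k, ?_⟩
  have hzero : ∀ j : ℕ, j ≠ k → homogeneousComponent j g = 0 := by
    intro j hj
    rw [← coeff_homPoly]
    rcases lt_or_gt_of_ne hj with hlt | hgt
    · exact Polynomial.coeff_eq_zero_of_lt_natTrailingDegree (by omega)
    · exact Polynomial.coeff_eq_zero_of_natDegree_lt (by omega)
  have hgk : g = homogeneousComponent k g := by
    conv_lhs => rw [← sum_homogeneousComponent g]
    rw [Finset.sum_eq_single k (fun i _ hik => hzero i hik)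
      (fun hk' => homogeneousComponent_eq_zero k g (by
        simp only [Finset.mem_range, not_lt] at hk'; omega))]
  rw [hgk]
  exact homogeneousComponent_isHomogeneous k g

lemma rank_minor {m n : ℕ} (M : Matrix (Fin m) (Fin n) ℝ) (h : M.rank ≤ 1)
    (i k : Fin m) (j l : Fin n) : M i j * M k l = M i l * M k j := by
  classical
  have hfin : Module.finrank ℝ ↥(LinearMap.range M.mulVecLin) ≤ 1 := h
  obtain ⟨v₀, hv₀⟩ := finrank_le_one_iff.mp hfin
  have hu : (fun r => M r j) ∈ LinearMap.range M.mulVecLin := by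
    refine ⟨Pi.single j 1, ?_⟩
    ext r
    simp [Matrix.mulVecLin_apply, Matrix.mulVec_single]
  have hv : (fun r => M r l) ∈ LinearMap.range M.mulVecLin := by
    refine ⟨Pi.single l 1, ?_⟩
    ext r
    simp [Matrix.mulVecLin_apply, Matrix.mulVec_single]
  obtain ⟨cu, hcu⟩ := hv₀ ⟨_, hu⟩
  obtain ⟨cv, hcv⟩ := hv₀ ⟨_, hv⟩
  have h1 : ∀ r, M r j = cu * (v₀ : Fin m → ℝ) r := by
    intro r
    have hx := congrFun (Subtype.ext_iff.mp hcu) r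
    simpa using hx.symm
  have h2 : ∀ r, M r l = cv * (v₀ : Fin m → ℝ) r := by
    intro r
    have hx := congrFun (Subtype.ext_iff.mp hcv) r
    simpa using hx.symm
  rw [h1 i, h1 k, h2 i, h2 k]
  ring

theorem stmt_2 (m n d p : ℕ) (hm : 0 < m) (hn : 0 < n) (hd : 0 < d) (hp : 0 < p)
    (A : Fin m → Fin n → MvPolynomial (Fin d) ℝ)
    (hhom : ∀ i j, (A i j).IsHomogeneous (2 * p))
    (hrank : ∀ x : Fin d → ℝ, (Matrix.of fun i j => eval x (A i j)).rank ≤ 1) :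
    ∃ (b : Fin m → MvPolynomial (Fin d) ℝ) (c : Fin n → MvPolynomial (Fin d) ℝ),
      (∀ i, ∃ k, (b i).IsHomogeneous k) ∧ (∀ j, ∃ k, (c j).IsHomogeneous k) ∧
      ∀ i j, A i j = b i * c j := by
  classical
  by_cases hA : ∀ i j, A i j = 0
  · exact ⟨fun _ => 0, fun _ => 0, fun i => ⟨0, isHomogeneous_zero _ _ 0⟩,
      fun j => ⟨0, isHomogeneous_zero _ _ 0⟩, fun i j => by simp [hA i j]⟩
  push_neg at hA
  obtain ⟨i0, j0, hA0⟩ := hA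
  letI : StrongNormalizationMonoid (MvPolynomial (Fin d) ℝ) :=
    UniqueFactorizationMonoid.strongNormalizationMonoid
  letI : StrongNormalizedGCDMonoid (MvPolynomial (Fin d) ℝ) :=
    UniqueFactorizationMonoid.toStrongNormalizedGCDMonoid _
  haveI : Nonempty (Fin n) := ⟨⟨0, hn⟩⟩
  have minor : ∀ (i k : Fin m) (j l : Fin n), A i j * A k l = A i l * A k j := by
    intro i k j l
    apply MvPolynomial.funext
    intro x
    have := rank_minor (Matrix.of fun i j => eval x (A i j)) (hrank x) i k j l
    simpa [map_mul] using this
  obtain ⟨c, hc, hc1⟩ := Finset.extract_gcd (fun j => A i0 j) Finset.univ_nonempty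
  set g := Finset.univ.gcd (fun j => A i0 j) with hg
  have hg0 : g ≠ 0 := by
    intro h
    exact hA0 (by rw [hc j0 (Finset.mem_univ _), h, zero_mul])
  have hcj0 : c j0 ≠ 0 := by
    intro h
    exact hA0 (by rw [hc j0 (Finset.mem_univ _), h, mul_zero])
  have key : ∀ i j, c j0 * A i j = A i j0 * c j := by
    intro i j
    have h1 := minor i0 i j0 j
    rw [hc j0 (Finset.mem_univ _), hc j (Finset.mem_univ _)] at h1
    -- h1 : g * c j0 * A i j = g * c j * A i j0
    have h2 : g * (c j0 * A i j) = g * (A i j0 * c j) := by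
      rw [← mul_assoc, ← mul_assoc, h1]; ring
    exact mul_left_cancel₀ hg0 h2
  have hdvd : ∀ i, c j0 ∣ A i j0 := by
    intro i
    have h1 : c j0 ∣ Finset.univ.gcd (fun j => A i j0 * c j) :=
      Finset.dvd_gcd fun j _ => ⟨A i j, (key i j).symm⟩
    rw [Finset.gcd_mul_left, hc1, mul_one] at h1
    exact h1.trans (normalize_associated _).dvd
  have hdvd' : ∀ i, ∃ t, A i j0 = c j0 * t := fun i => hdvd i
  choose b hb using hdvd'
  have hfact : ∀ i j, A i j = b i * c j := by
    intro i j
    apply mul_left_cancel₀ hcj0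
    rw [key i j, hb i]
    ring
  refine ⟨b, c, ?_, ?_, hfact⟩
  · intro i
    by_cases hb0 : b i = 0
    · exact ⟨0, hb0 ▸ isHomogeneous_zero _ _ 0⟩
    · have hne : c j0 * b i ≠ 0 := mul_ne_zero hcj0 hb0
      have hhom' : (c j0 * b i).IsHomogeneous (2 * p) := by
        rw [← hb i]; exact hhom i j0
      exact factor_homog (c j0) (b i) (2 * p) hhom' hne
  · intro j
    by_cases hc0 : c j = 0
    · exact ⟨0, hc0 ▸ isHomogeneous_zero _ _ 0⟩
    · have hne : g * c j ≠ 0 := mul_ne_zero hg0 hc0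
      have hhom' : (g * c j).IsHomogeneous (2 * p) := by
        rw [← hc j (Finset.mem_univ _)]; exact hhom i0 j
      exact factor_homog g (c j) (2 * p) hhom' hne
end

section
/- Let P(x) be a real quadratic form in three variables and let Q(x) be a nonnegative homogeneous polynomial of degree four in three variables. Suppose there exists δ > 0 such that for every t ∈ [0, δ] there is a quadratic form R_t with P(x)² − t·Q(x) = R_t(x)² for all x ∈ ℝ³. Then Q(x) = α²·P(x)² for some real α. -/
open MvPolynomial

/-- Evaluating an `MvPolynomial` along an affine line gives a polynomial function of the
parameter, of degree at most the total degree. -/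
private lemma evalLine (n : ℕ) (P : MvPolynomial (Fin 3) ℝ) (hd : P.totalDegree ≤ n)
    (u v : Fin 3 → ℝ) :
    ∃ f : Polynomial ℝ, f.natDegree ≤ n ∧
      ∀ s : ℝ, f.eval s = eval (fun i => u i + s * v i) P := by
  refine ⟨aeval (fun i => Polynomial.C (u i) + Polynomial.C (v i) * Polynomial.X) P, ?_, ?_⟩
  · have h := aeval_natDegree_le P hd
      (fun i => Polynomial.C (u i) + Polynomial.C (v i) * Polynomial.X) (n := 1) (fun i => ?_)
    · simpa using h
    · refine le_trans (Polynomial.natDegree_add_le _ _) ?_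
      simp only [Polynomial.natDegree_C, max_le_iff]
      exact ⟨Nat.zero_le _,
        le_trans (Polynomial.natDegree_C_mul_le _ _) Polynomial.natDegree_X_le⟩
  · intro s
    clear hd
    induction P using MvPolynomial.induction_on with
    | C a => simp
    | add p q hp hq => simp only [map_add, Polynomial.eval_add, eval_add, hp, hq]
    | mul_X p i hp =>
        simp only [map_mul, Polynomial.eval_mul, aeval_X, Polynomial.eval_add,
          Polynomial.eval_C, Polynomial.eval_X, eval_mul, eval_X, hp]
        ring

private lemma coeffs2 (P : MvPolynomial (Fin 3) ℝ) (hd : P.totalDegree ≤ 2) (u v : Fin 3 → ℝ) :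
    ∃ a b c : ℝ, ∀ s : ℝ, eval (fun i => u i + s * v i) P = a*s^2 + b*s + c := by
  obtain ⟨f, hf, he⟩ := evalLine 2 P hd u v
  refine ⟨f.coeff 2, f.coeff 1, f.coeff 0, fun s => ?_⟩
  have h3 : f.natDegree < 3 := by omega
  rw [← he s, Polynomial.eval_eq_sum_range' h3 s]
  simp only [Finset.sum_range_succ, Finset.sum_range_zero]
  ring

private lemma coeffs4 (P : MvPolynomial (Fin 3) ℝ) (hd : P.totalDegree ≤ 4) (u v : Fin 3 → ℝ) :
    ∃ q4 q3 q2 q1 q0 : ℝ, ∀ s : ℝ,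
      eval (fun i => u i + s * v i) P = q4*s^4 + q3*s^3 + q2*s^2 + q1*s + q0 := by
  obtain ⟨f, hf, he⟩ := evalLine 4 P hd u v
  refine ⟨f.coeff 4, f.coeff 3, f.coeff 2, f.coeff 1, f.coeff 0, fun s => ?_⟩
  have h5 : f.natDegree < 5 := by omega
  rw [← he s, Polynomial.eval_eq_sum_range' h5 s]
  simp only [Finset.sum_range_succ, Finset.sum_range_zero]
  ring

/-- A nonnegative real quartic has nonnegative leading coefficient. -/
private lemma lead4 (q4 q3 q2 q1 q0 : ℝ)
    (h : ∀ s : ℝ, 0 ≤ q4*s^4 + q3*s^3 + q2*s^2 + q1*s + q0) : 0 ≤ q4 := by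
  by_contra hneg
  push_neg at hneg
  set K : ℝ := |q3| + |q2| + |q1| + |q0| + 1 with hK
  have hKpos : 0 < K := by positivity
  set s : ℝ := max 1 (K / (-q4)) with hs
  have hs1 : (1:ℝ) ≤ s := le_max_left _ _
  have hs0 : (0:ℝ) < s := lt_of_lt_of_le one_pos hs1
  have hs2 : K / (-q4) ≤ s := le_max_right _ _
  have hq4s : q4 * s ≤ -K := by
    rw [div_le_iff₀ (by linarith : (0:ℝ) < -q4)] at hs2
    nlinarith
  have hs23 : s^2 ≤ s^3 := by nlinarith [mul_nonneg (sq_nonneg s) (by linarith : (0:ℝ) ≤ s - 1)]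
  have hs13 : s ≤ s^3 := by
    nlinarith [mul_nonneg (mul_nonneg hs0.le (by linarith : (0:ℝ) ≤ s - 1))
      (by linarith : (0:ℝ) ≤ s + 1)]
  have hs03 : (1:ℝ) ≤ s^3 := by nlinarith
  have h3 : q3*s^3 ≤ |q3| * s^3 :=
    mul_le_mul_of_nonneg_right (le_abs_self q3) (by positivity)
  have h2 : q2*s^2 ≤ |q2| * s^3 :=
    le_trans (mul_le_mul_of_nonneg_right (le_abs_self q2) (sq_nonneg s))
      (mul_le_mul_of_nonneg_left hs23 (abs_nonneg q2))
  have h1 : q1*s ≤ |q1| * s^3 :=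
    le_trans (mul_le_mul_of_nonneg_right (le_abs_self q1) hs0.le)
      (mul_le_mul_of_nonneg_left hs13 (abs_nonneg q1))
  have h0 : q0 ≤ |q0| * s^3 := by
    calc q0 ≤ |q0| := le_abs_self q0
    _ = |q0| * 1 := by ring
    _ ≤ |q0| * s^3 := mul_le_mul_of_nonneg_left hs03 (abs_nonneg q0)
  have hd : q4*s*s^3 ≤ -K*s^3 := mul_le_mul_of_nonneg_right hq4s (by positivity)
  have heq : q4*s^4 = q4*s*s^3 := by ring
  have hKs2 : -K*s^3 = -(|q3| * s^3) - |q2| * s^3 - |q1| * s^3 - |q0| * s^3 - s^3 := by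
    rw [hK]; ring
  have hs3pos : (0:ℝ) < s^3 := by positivity
  have := h s
  linarith

/-- A nonnegative real quadratic has nonnegative leading coefficient. -/
private lemma lead2 (q2 q1 q0 : ℝ) (h : ∀ s : ℝ, 0 ≤ q2*s^2 + q1*s + q0) : 0 ≤ q2 := by
  by_contra hneg
  push_neg at hneg
  set K : ℝ := |q1| + |q0| + 1 with hK
  have hKpos : 0 < K := by positivity
  set s : ℝ := max 1 (K / (-q2)) with hs
  have hs1 : (1:ℝ) ≤ s := le_max_left _ _
  have hs0 : (0:ℝ) < s := lt_of_lt_of_le one_pos hs1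
  have hs2 : K / (-q2) ≤ s := le_max_right _ _
  have hq2s : q2 * s ≤ -K := by
    rw [div_le_iff₀ (by linarith : (0:ℝ) < -q2)] at hs2
    nlinarith
  have h1 : q1*s ≤ |q1| * s := mul_le_mul_of_nonneg_right (le_abs_self q1) hs0.le
  have h0 : q0 ≤ |q0| * s := by
    calc q0 ≤ |q0| := le_abs_self q0
    _ = |q0| * 1 := by ring
    _ ≤ |q0| * s := mul_le_mul_of_nonneg_left hs1 (abs_nonneg q0)
  have hd : q2*s*s ≤ -K*s := mul_le_mul_of_nonneg_right hq2s hs0.le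
  have heq : q2*s^2 = q2*s*s := by ring
  have hKs2 : -K*s = -(|q1| * s) - |q0| * s - s := by rw [hK]; ring
  have := h s
  linarith

private lemma two_point (L M m : ℝ) (hm : 0 < m)
    (h1 : m*(L + M*m) = 0) (h2 : (m/2)*(L + M*(m/2)) = 0) : L = 0 ∧ M = 0 := by
  have a1 : L + M*m = 0 := (mul_eq_zero.mp h1).resolve_left hm.ne'
  have a2 : L + M*(m/2) = 0 := (mul_eq_zero.mp h2).resolve_left (by positivity : (0:ℝ) < m/2).ne'
  have c1 : M*(m/2) = 0 := by linarith
  have hM : M = 0 := (mul_eq_zero.mp c1).resolve_right (by positivity : (0:ℝ) < m/2).ne'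
  refine ⟨?_, hM⟩
  rw [hM] at a1
  linarith

private lemma three_point (K0 K1 K2 m : ℝ) (hm : 0 < m)
    (h1 : m*(K0 + K1*m + K2*m^2) = 0)
    (h2 : (m/2)*(K0 + K1*(m/2) + K2*(m/2)^2) = 0)
    (h3 : (m/3)*(K0 + K1*(m/3) + K2*(m/3)^2) = 0) : K0 = 0 ∧ K1 = 0 ∧ K2 = 0 := by
  have b1 : K0 + K1*m + K2*m^2 = 0 := (mul_eq_zero.mp h1).resolve_left hm.ne'
  have b2 : K0 + K1*(m/2) + K2*(m/2)^2 = 0 :=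
    (mul_eq_zero.mp h2).resolve_left (by positivity : (0:ℝ) < m/2).ne'
  have b3 : K0 + K1*(m/3) + K2*(m/3)^2 = 0 :=
    (mul_eq_zero.mp h3).resolve_left (by positivity : (0:ℝ) < m/3).ne'
  have c1 : K1*(m/2) + 3*K2*m^2/4 = 0 := by linear_combination b1 - b2
  have c2 : K1*(m/6) + 5*K2*m^2/36 = 0 := by linear_combination b2 - b3
  have c3 : K2*(m^2/9) = 0 := by linear_combination (1/3)*c1 - c2
  have hK2 : K2 = 0 := (mul_eq_zero.mp c3).resolve_right (by positivity : (0:ℝ) < m^2/9).ne'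
  have c4 : K1*(m/2) = 0 := by
    rw [hK2] at c1; linarith
  have hK1 : K1 = 0 := (mul_eq_zero.mp c4).resolve_right (by positivity : (0:ℝ) < m/2).ne'
  refine ⟨?_, hK1, hK2⟩
  rw [hK1, hK2] at b1
  linarith

/-- Core algebraic lemma in the normalized situation (no `s`-coefficient `b`). -/
private lemma core0 (a d q4 r3 r2 r1 r0 δ : ℝ) (ha : a ≠ 0) (hδ : 0 < δ)
    (hex : ∀ t : ℝ, 0 < t → t ≤ δ → ∃ x y z : ℝ,
      x^2 = a^2 - t*q4 ∧ 2*x*y = -(t*r3) ∧ y^2 + 2*x*z = 2*a*d - t*r2 ∧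
      2*y*z = -(t*r1) ∧ z^2 = d^2 - t*r0) :
    r3 = 0 ∧ r1 = 0 ∧ a*r2 - 2*d*q4 = 0 ∧ a^2*r0 - d^2*q4 = 0 := by
  have ha2 : (0:ℝ) < a^2 := lt_of_le_of_ne (sq_nonneg a) (Ne.symm (pow_ne_zero 2 ha))
  -- Step 1: identities from `8A²D + B³ - 4ABC = 0`
  have hG1 : ∀ t : ℝ, 0 < t → t ≤ δ →
      t*((8*a^4*r1 - 8*a^3*d*r3) + (-16*a^2*q4*r1 + 4*a^2*r2*r3 + 8*a*d*q4*r3)*t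
        + (8*q4^2*r1 + r3^3 - 4*q4*r2*r3)*t^2) = 0 := by
    intro t ht hle
    obtain ⟨x, y, z, h1, h2, h3, h4, h5⟩ := hex t ht hle
    have p1 : (2*x*y)*((2*x*y)*(2*x*y)) = (-(t*r3))*((-(t*r3))*(-(t*r3))) := by rw [h2]
    have p2 : (x^2)*((2*x*y)*(y^2 + 2*x*z))
        = (a^2 - t*q4)*((-(t*r3))*(2*a*d - t*r2)) := by rw [h1, h2, h3]
    have p3 : (x^2)*((x^2)*(2*y*z)) = (a^2 - t*q4)*((a^2 - t*q4)*(-(t*r1))) := by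
      rw [h1, h4]
    linear_combination p1 - 4*p2 + 8*p3
  obtain ⟨hK0, hK1, hK2⟩ := three_point _ _ _ δ hδ (hG1 δ hδ le_rfl)
    (hG1 (δ/2) (by linarith) (by linarith)) (hG1 (δ/3) (by linarith) (by linarith))
  have hγ : a*r1 - d*r3 = 0 := by
    have h8 : a^3*(8*(a*r1 - d*r3)) = 0 := by linear_combination hK0
    have := (mul_eq_zero.mp h8).resolve_left (pow_ne_zero 3 ha)
    linarith
  have hr3 : r3 = 0 := by
    have h3 : a^2*r3^3 = 0 := by linear_combination a^2*hK2 + q4*hK1 + 8*a*q4^2*hγ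
    have h4 := (mul_eq_zero.mp h3).resolve_left (pow_ne_zero 2 ha)
    exact pow_eq_zero_iff (three_ne_zero) |>.mp h4
  have hr1 : r1 = 0 := by
    rw [hr3] at hγ
    have : a*r1 = 0 := by linarith
    exact (mul_eq_zero.mp this).resolve_left ha
  -- Step 2: identities from `4AE = C²` for small t
  set m : ℝ := min δ (a^2/(2*|q4| + 2)) with hm
  have hm0 : 0 < m := lt_min hδ (by positivity)
  have hmδ : m ≤ δ := min_le_left _ _
  have hmq : m*(2*|q4|+2) ≤ a^2 := by
    rw [← le_div_iff₀ (by positivity : (0:ℝ) < 2*|q4|+2)]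
    exact min_le_right _ _
  have hA : ∀ t : ℝ, 0 < t → t ≤ m → 0 < a^2 - t*q4 := by
    intro t ht htm
    nlinarith [le_abs_self q4, abs_nonneg q4]
  have hP : ∀ t : ℝ, 0 < t → t ≤ m →
      t*((4*a^2*r0 + 4*q4*d^2 - 4*a*d*r2) + (r2^2 - 4*q4*r0)*t) = 0 := by
    intro t ht htm
    obtain ⟨x, y, z, h1, h2, h3, h4, h5⟩ := hex t ht (le_trans htm hmδ)
    rw [hr3] at h2
    have hxy : x*y = 0 := by linear_combination h2/2
    have hx : x ≠ 0 := by
      intro hx0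
      have := hA t ht htm
      rw [hx0] at h1
      nlinarith
    have hy : y = 0 := (mul_eq_zero.mp hxy).resolve_left hx
    have h3' : 2*x*z = 2*a*d - t*r2 := by linear_combination h3 - y*hy
    have p1 : (2*x*z)*(2*x*z) = (2*a*d - t*r2)*(2*a*d - t*r2) := by rw [h3']
    have p2 : (x^2)*(z^2) = (a^2 - t*q4)*(d^2 - t*r0) := by rw [h1, h5]
    linear_combination -p1 + 4*p2
  obtain ⟨hL1, hL2⟩ := two_point _ _ m hm0 (hP m hm0 le_rfl)
    (hP (m/2) (by linarith) (by linarith))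
  have hsq2 : (a*r2 - 2*d*q4)^2 = 0 := by linear_combination a^2*hL2 + q4*hL1
  have hr2 : a*r2 - 2*d*q4 = 0 := pow_eq_zero_iff two_ne_zero |>.mp hsq2
  have hr0 : a^2*r0 - d^2*q4 = 0 := by linear_combination (1/4)*hL1 + d*hr2
  exact ⟨hr3, hr1, hr2, hr0⟩

/-- Core real-variable lemma: a line's worth of coefficient data. -/
private lemma core (a b c q4 q3 q2 q1 q0 δ : ℝ) (hδ : 0 < δ)
    (hnn : ∀ s : ℝ, 0 ≤ q4*s^4 + q3*s^3 + q2*s^2 + q1*s + q0)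
    (hex : ∀ t : ℝ, 0 < t → t ≤ δ → ∃ x y z : ℝ,
      x^2 = a^2 - t*q4 ∧ 2*x*y = 2*a*b - t*q3 ∧ y^2 + 2*x*z = b^2 + 2*a*c - t*q2 ∧
      2*y*z = 2*b*c - t*q1 ∧ z^2 = c^2 - t*q0) :
    ∃ lam : ℝ, ∀ s : ℝ, q4*s^4 + q3*s^3 + q2*s^2 + q1*s + q0 = lam * (a*s^2 + b*s + c)^2 := by
  by_cases ha : a = 0
  · subst ha
    have hq4le : q4 ≤ 0 := by
      obtain ⟨x, y, z, h1, -, -, -, -⟩ := hex δ hδ le_rfl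
      nlinarith [sq_nonneg x]
    have hq4 : q4 = 0 := le_antisymm hq4le (lead4 _ _ _ _ _ hnn)
    have hxzero : ∀ t : ℝ, 0 < t → t ≤ δ → ∀ x : ℝ, x^2 = 0^2 - t*q4 → x = 0 := by
      intro t ht hle x h1
      have : x^2 = 0 := by rw [h1, hq4]; ring
      exact pow_eq_zero_iff two_ne_zero |>.mp this
    have hq3 : q3 = 0 := by
      obtain ⟨x, y, z, h1, h2, -, -, -⟩ := hex δ hδ le_rfl
      have hx : x = 0 := hxzero δ hδ le_rfl x h1
      have hδq3 : δ*q3 = 0 := by linear_combination h2 - 2*y*hx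
      exact (mul_eq_zero.mp hδq3).resolve_left hδ.ne'
    by_cases hb : b = 0
    · subst hb
      have hq2le : q2 ≤ 0 := by
        obtain ⟨x, y, z, h1, -, h3, -, -⟩ := hex δ hδ le_rfl
        have hx : x = 0 := hxzero δ hδ le_rfl x h1
        have h3' : y^2 = -(δ*q2) := by linear_combination h3 - 2*z*hx
        nlinarith [sq_nonneg y]
      have hq2 : q2 = 0 := by
        refine le_antisymm hq2le (lead2 q2 q1 q0 fun s => ?_)
        have h := hnn s
        rw [hq4, hq3] at h
        linarith
      have hq1 : q1 = 0 := by
        obtain ⟨x, y, z, h1, -, h3, h4, -⟩ := hex δ hδ le_rfl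
        have hx : x = 0 := hxzero δ hδ le_rfl x h1
        have hy2 : y^2 = 0 := by linear_combination h3 - 2*z*hx - δ*hq2
        have hy : y = 0 := pow_eq_zero_iff two_ne_zero |>.mp hy2
        have hδq1 : δ*q1 = 0 := by linear_combination h4 - 2*z*hy
        exact (mul_eq_zero.mp hδq1).resolve_left hδ.ne'
      by_cases hc : c = 0
      · have hq0le : q0 ≤ 0 := by
          obtain ⟨x, y, z, -, -, -, -, h5⟩ := hex δ hδ le_rfl
          rw [hc] at h5
          nlinarith [sq_nonneg z]
        have hq0 : q0 = 0 := by
          have h := hnn 0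
          have : (0:ℝ) ≤ q0 := by nlinarith
          linarith
        exact ⟨0, fun s => by rw [hq4, hq3, hq2, hq1, hq0]; ring⟩
      · refine ⟨q0/c^2, fun s => ?_⟩
        rw [hq4, hq3, hq2, hq1]
        field_simp
        ring
    · -- a = 0, b ≠ 0
      have key : ∀ t : ℝ, 0 < t → t ≤ δ →
          t*((4*b^2*q0 + 4*c^2*q2 - 4*b*c*q1) + (q1^2 - 4*q2*q0)*t) = 0 := by
        intro t ht hle
        obtain ⟨x, y, z, h1, h2, h3, h4, h5⟩ := hex t ht hle
        have hx : x = 0 := hxzero t ht hle x h1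
        have h3' : y^2 = b^2 - t*q2 := by linear_combination h3 - 2*z*hx
        have p1 : (2*y*z)*(2*y*z) = (2*b*c - t*q1)*(2*b*c - t*q1) := by rw [h4]
        have p2 : (y^2)*(z^2) = (b^2 - t*q2)*(c^2 - t*q0) := by rw [h3', h5]
        linear_combination -p1 + 4*p2
      obtain ⟨hL, hM⟩ := two_point _ _ δ hδ (key δ hδ le_rfl)
        (key (δ/2) (by linarith) (by linarith))
      have hsq2 : (b*q1 - 2*c*q2)^2 = 0 := by linear_combination b^2*hM + q2*hL
      have hbq1 : b*q1 - 2*c*q2 = 0 := pow_eq_zero_iff two_ne_zero |>.mp hsq2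
      have hbq0 : b^2*q0 - c^2*q2 = 0 := by linear_combination (1/4)*hL + c*hbq1
      refine ⟨q2/b^2, fun s => ?_⟩
      rw [hq4, hq3]
      rw [div_mul_eq_mul_div, eq_div_iff (pow_ne_zero 2 hb)]
      linear_combination (s*b)*hbq1 + hbq0
  · -- a ≠ 0
    have ha2 : (0:ℝ) < a^2 := lt_of_le_of_ne (sq_nonneg a) (Ne.symm (pow_ne_zero 2 ha))
    obtain ⟨e, he⟩ : ∃ e : ℝ, 2*a*e + b = 0 := ⟨-b/(2*a), by field_simp; ring⟩
    have hex' : ∀ t : ℝ, 0 < t → t ≤ δ → ∃ x y z : ℝ,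
        x^2 = a^2 - t*q4 ∧
        2*x*y = -(t*(q3 + 4*e*q4)) ∧
        y^2 + 2*x*z = 2*a*(a*e^2 + b*e + c) - t*(q2 + 3*e*q3 + 6*e^2*q4) ∧
        2*y*z = -(t*(q1 + 2*e*q2 + 3*e^2*q3 + 4*e^3*q4)) ∧
        z^2 = (a*e^2 + b*e + c)^2 - t*(q0 + e*q1 + e^2*q2 + e^3*q3 + e^4*q4) := by
      intro t ht hle
      obtain ⟨x, y, z, h1, h2, h3, h4, h5⟩ := hex t ht hle
      refine ⟨x, 2*x*e + y, x*e^2 + y*e + z, h1, ?_, ?_, ?_, ?_⟩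
      · linear_combination 4*e*h1 + h2 + 2*a*he
      · linear_combination 6*e^2*h1 + 3*e*h2 + h3 + (2*a*e+b)*he
      · linear_combination 4*e^3*h1 + 3*e^2*h2 + 2*e*h3 + h4 + (2*e*(a*e+b)+2*c)*he
      · linear_combination e^4*h1 + e^3*h2 + e^2*h3 + e*h4 + h5
    obtain ⟨hr3, hr1, hr2, hr0⟩ := core0 a (a*e^2 + b*e + c) q4 (q3 + 4*e*q4)
      (q2 + 3*e*q3 + 6*e^2*q4) (q1 + 2*e*q2 + 3*e^2*q3 + 4*e^3*q4)
      (q0 + e*q1 + e^2*q2 + e^3*q3 + e^4*q4) δ ha hδ hex'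
    refine ⟨q4/a^2, fun s => ?_⟩
    have key : a^2*(q4*(s-e)^4 + (q3 + 4*e*q4)*(s-e)^3 + (q2 + 3*e*q3 + 6*e^2*q4)*(s-e)^2
        + (q1 + 2*e*q2 + 3*e^2*q3 + 4*e^3*q4)*(s-e)
        + (q0 + e*q1 + e^2*q2 + e^3*q3 + e^4*q4))
        = q4*(a*(s-e)^2 + (a*e^2 + b*e + c))^2 := by
      linear_combination (a^2*(s-e)^3)*hr3 + ((s-e)^2*a)*hr2 + (a^2*(s-e))*hr1 + hr0
    have h1 : q4*s^4 + q3*s^3 + q2*s^2 + q1*s + q0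
        = q4*(s-e)^4 + (q3 + 4*e*q4)*(s-e)^3 + (q2 + 3*e*q3 + 6*e^2*q4)*(s-e)^2
        + (q1 + 2*e*q2 + 3*e^2*q3 + 4*e^3*q4)*(s-e)
        + (q0 + e*q1 + e^2*q2 + e^3*q3 + e^4*q4) := by ring
    have h2 : a*s^2 + b*s + c = a*(s-e)^2 + (a*e^2 + b*e + c) := by
      linear_combination (s-e)*he
    rw [h1, h2, div_mul_eq_mul_div, eq_div_iff (ne_of_gt ha2)]
    linear_combination key

/-- Along every affine line, `Q` is a constant multiple of `P²`. -/
private lemma line_lemma (P Q : MvPolynomial (Fin 3) ℝ)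
    (hP : P.IsHomogeneous 2) (hQ : Q.IsHomogeneous 4)
    (hQnn : ∀ x : Fin 3 → ℝ, 0 ≤ eval x Q)
    (δ : ℝ) (hδ : 0 < δ)
    (hsq : ∀ t ∈ Set.Icc (0 : ℝ) δ, ∃ R : MvPolynomial (Fin 3) ℝ, R.IsHomogeneous 2 ∧
      ∀ x : Fin 3 → ℝ, (eval x P) ^ 2 - t * eval x Q = (eval x R) ^ 2)
    (u v : Fin 3 → ℝ) :
    ∃ lam : ℝ, ∀ s : ℝ,
      eval (fun i => u i + s * v i) Q = lam * (eval (fun i => u i + s * v i) P)^2 := by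
  obtain ⟨a, b, c, hp⟩ := coeffs2 P hP.totalDegree_le u v
  obtain ⟨q4, q3, q2, q1, q0, hq⟩ := coeffs4 Q hQ.totalDegree_le u v
  have hnn : ∀ s : ℝ, 0 ≤ q4*s^4 + q3*s^3 + q2*s^2 + q1*s + q0 := by
    intro s
    rw [← hq s]
    exact hQnn _
  have hex : ∀ t : ℝ, 0 < t → t ≤ δ → ∃ x y z : ℝ,
      x^2 = a^2 - t*q4 ∧ 2*x*y = 2*a*b - t*q3 ∧ y^2 + 2*x*z = b^2 + 2*a*c - t*q2 ∧
      2*y*z = 2*b*c - t*q1 ∧ z^2 = c^2 - t*q0 := by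
    intro t ht hle
    obtain ⟨R, hR2, hReq⟩ := hsq t ⟨le_of_lt ht, hle⟩
    obtain ⟨x, y, z, hr⟩ := coeffs2 R hR2.totalDegree_le u v
    have H : ∀ s : ℝ, (a*s^2 + b*s + c)^2 - t*(q4*s^4 + q3*s^3 + q2*s^2 + q1*s + q0)
        = (x*s^2 + y*s + z)^2 := by
      intro s
      rw [← hp s, ← hq s, ← hr s]
      exact hReq _
    have H0 := H 0
    have H1 := H 1
    have Hm1 := H (-1)
    have H2 := H 2
    have Hm2 := H (-2)
    refine ⟨x, y, z, ?_, ?_, ?_, ?_, ?_⟩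
    · linear_combination (-1/24)*H2 + (-1/24)*Hm2 + (1/6)*H1 + (1/6)*Hm1 + (-1/4)*H0
    · linear_combination (-1/12)*H2 + (1/12)*Hm2 + (1/6)*H1 + (-1/6)*Hm1
    · linear_combination (1/24)*H2 + (1/24)*Hm2 + (-2/3)*H1 + (-2/3)*Hm1 + (5/4)*H0
    · linear_combination (1/12)*H2 + (-1/12)*Hm2 + (-2/3)*H1 + (2/3)*Hm1
    · linear_combination -H0
  obtain ⟨lam, hlam⟩ := core a b c q4 q3 q2 q1 q0 δ hδ hnn hex
  refine ⟨lam, fun s => ?_⟩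
  rw [hq s, hp s]
  exact hlam s

theorem stmt_6 (P Q : MvPolynomial (Fin 3) ℝ)
    (hP : P.IsHomogeneous 2) (hQ : Q.IsHomogeneous 4)
    (hQnn : ∀ x : Fin 3 → ℝ, 0 ≤ eval x Q)
    (δ : ℝ) (hδ : 0 < δ)
    (hsq : ∀ t ∈ Set.Icc (0 : ℝ) δ, ∃ R : MvPolynomial (Fin 3) ℝ, R.IsHomogeneous 2 ∧
      ∀ x : Fin 3 → ℝ, (eval x P) ^ 2 - t * eval x Q = (eval x R) ^ 2) :
    ∃ α : ℝ, ∀ x : Fin 3 → ℝ, eval x Q = α ^ 2 * (eval x P) ^ 2 := by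
  by_cases hP0 : ∀ x : Fin 3 → ℝ, eval x P = 0
  · refine ⟨0, fun x => ?_⟩
    obtain ⟨lam, hlam⟩ := line_lemma P Q hP hQ hQnn δ hδ hsq x x
    have h0 := hlam 0
    have hfun : (fun i => x i + (0:ℝ) * x i) = x := by funext i; ring
    rw [hfun] at h0
    rw [h0, hP0 x]
    ring
  · push_neg at hP0
    obtain ⟨x₀, hx₀⟩ := hP0
    have hx₀2 : (0:ℝ) < (eval x₀ P)^2 := lt_of_le_of_ne (sq_nonneg _) (Ne.symm (pow_ne_zero 2 hx₀))
    refine ⟨Real.sqrt (eval x₀ Q / (eval x₀ P)^2), fun x => ?_⟩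
    obtain ⟨lam, hlam⟩ := line_lemma P Q hP hQ hQnn δ hδ hsq x₀ (fun i => x i - x₀ i)
    have h0 := hlam 0
    have hfun0 : (fun i => x₀ i + (0:ℝ) * (x i - x₀ i)) = x₀ := by funext i; ring
    rw [hfun0] at h0
    have h1 := hlam 1
    have hfun1 : (fun i => x₀ i + (1:ℝ) * (x i - x₀ i)) = x := by funext i; ring
    rw [hfun1] at h1
    have hlamval : lam = eval x₀ Q / (eval x₀ P)^2 := by
      rw [eq_div_iff (ne_of_gt hx₀2)]
      exact h0.symm
    have hlamnn : 0 ≤ lam := by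
      rw [hlamval]
      exact div_nonneg (hQnn x₀) (le_of_lt hx₀2)
    rw [h1, Real.sq_sqrt (by rw [← hlamval]; exact hlamnn)]
    rw [← hlamval]
end

section
/- For n×n real symmetric positive semidefinite matrices A and B, (det(A + B))^{1/n} ≥ (det A)^{1/n} + (det B)^{1/n}. -/
open Finset

-- superadditivity of geometric mean
lemma gm_superadd (n : ℕ) (hn : 0 < n) (a b : Fin n → ℝ)
    (ha : ∀ i, 0 ≤ a i) (hb : ∀ i, 0 ≤ b i) :
    (∏ i, a i) ^ ((1 : ℝ)/n) + (∏ i, b i) ^ ((1 : ℝ)/n)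
      ≤ (∏ i, (a i + b i)) ^ ((1 : ℝ)/n) := by
  have hp : (0:ℝ) < 1/n := by positivity
  by_cases hz : ∃ i, a i + b i = 0
  · obtain ⟨i, hi⟩ := hz
    have hai : a i = 0 := le_antisymm (by linarith [hb i, ha i]) (ha i)
    have hbi : b i = 0 := by linarith [ha i]
    rw [Finset.prod_eq_zero (Finset.mem_univ i) hai,
        Finset.prod_eq_zero (Finset.mem_univ i) hbi,
        Finset.prod_eq_zero (Finset.mem_univ i) hi,
        Real.zero_rpow hp.ne']
    norm_num
  · push_neg at hz
    have hs : ∀ i, 0 < a i + b i := fun i =>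
      lt_of_le_of_ne (add_nonneg (ha i) (hb i)) (Ne.symm (hz i))
    have hw' : ∑ _i : Fin n, (1:ℝ)/n = 1 := by
      simp [Finset.sum_const]
      field_simp
    have h1 := Real.geom_mean_le_arith_mean_weighted Finset.univ
        (fun _ => (1:ℝ)/n) (fun i => a i / (a i + b i))
        (fun i _ => hp.le) hw' (fun i _ => div_nonneg (ha i) (hs i).le)
    have h2 := Real.geom_mean_le_arith_mean_weighted Finset.univ
        (fun _ => (1:ℝ)/n) (fun i => b i / (a i + b i))
        (fun i _ => hp.le) hw' (fun i _ => div_nonneg (hb i) (hs i).le)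
    have hsum : ∑ i, (1:ℝ)/n * (a i / (a i + b i)) +
        ∑ i, (1:ℝ)/n * (b i / (a i + b i)) = 1 := by
      rw [← Finset.sum_add_distrib]
      have : ∀ i ∈ Finset.univ, (1:ℝ)/n * (a i / (a i + b i)) +
          (1:ℝ)/n * (b i / (a i + b i)) = (1:ℝ)/n := by
        intro i _
        rw [← mul_add, ← add_div, div_self (hs i).ne', mul_one]
      rw [Finset.sum_congr rfl this]
      exact hw'
    have key : (∏ i, (a i / (a i + b i))) ^ ((1:ℝ)/n) +
        (∏ i, (b i / (a i + b i))) ^ ((1:ℝ)/n) ≤ 1 := by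
      rw [← Real.finset_prod_rpow _ _ (fun i _ => div_nonneg (ha i) (hs i).le) _,
          ← Real.finset_prod_rpow _ _ (fun i _ => div_nonneg (hb i) (hs i).le) _]
      calc _ ≤ (∑ i, (1:ℝ)/n * (a i / (a i + b i))) +
            (∑ i, (1:ℝ)/n * (b i / (a i + b i))) := add_le_add h1 h2
        _ = 1 := hsum
    have hP : (0:ℝ) < ∏ i, (a i + b i) := Finset.prod_pos (fun i _ => hs i)
    have ea : (∏ i, (a i / (a i + b i))) ^ ((1:ℝ)/n) * (∏ i, (a i + b i)) ^ ((1:ℝ)/n)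
        = (∏ i, a i) ^ ((1:ℝ)/n) := by
      rw [← Real.mul_rpow (Finset.prod_nonneg fun i _ => div_nonneg (ha i) (hs i).le) hP.le,
          ← Finset.prod_mul_distrib]
      congr 1
      exact Finset.prod_congr rfl fun i _ => div_mul_cancel₀ _ (hs i).ne'
    have eb : (∏ i, (b i / (a i + b i))) ^ ((1:ℝ)/n) * (∏ i, (a i + b i)) ^ ((1:ℝ)/n)
        = (∏ i, b i) ^ ((1:ℝ)/n) := by
      rw [← Real.mul_rpow (Finset.prod_nonneg fun i _ => div_nonneg (hb i) (hs i).le) hP.le,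
          ← Finset.prod_mul_distrib]
      congr 1
      exact Finset.prod_congr rfl fun i _ => div_mul_cancel₀ _ (hs i).ne'
    calc (∏ i, a i) ^ ((1:ℝ)/n) + (∏ i, b i) ^ ((1:ℝ)/n)
        = ((∏ i, (a i / (a i + b i))) ^ ((1:ℝ)/n) +
           (∏ i, (b i / (a i + b i))) ^ ((1:ℝ)/n)) * (∏ i, (a i + b i)) ^ ((1:ℝ)/n) := by
          rw [add_mul, ea, eb]
      _ ≤ 1 * (∏ i, (a i + b i)) ^ ((1:ℝ)/n) := by
          apply mul_le_mul_of_nonneg_right key (Real.rpow_nonneg hP.le _)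
      _ = _ := one_mul _

lemma psd_det_nonneg {n : ℕ} {A : Matrix (Fin n) (Fin n) ℝ} (hA : A.PosSemidef) :
    0 ≤ A.det := by
  rw [hA.1.det_eq_prod_eigenvalues]
  exact Finset.prod_nonneg fun i _ => by exact_mod_cast hA.eigenvalues_nonneg i

open scoped MatrixOrder in
lemma key_decomp (n : ℕ) (A B : Matrix (Fin n) (Fin n) ℝ)
    (hA : A.PosSemidef) (hB : B.PosSemidef) (hdA : A.det ≠ 0) :
    ∃ μ : Fin n → ℝ, (∀ i, 0 ≤ μ i) ∧
      (A + B).det = A.det * ∏ i, (1 + μ i) ∧ B.det = A.det * ∏ i, μ i := by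
  classical
  set S := CFC.sqrt A with hSdef
  have hS : S.PosSemidef := Matrix.nonneg_iff_posSemidef.mp (CFC.sqrt_nonneg A)
  have hSS : S * S = A := CFC.sqrt_mul_sqrt_self A hA.nonneg
  have hdS : S.det ≠ 0 := by
    intro h
    apply hdA
    rw [← hSS, Matrix.det_mul, h, mul_zero]
  have hUnit : IsUnit S.det := isUnit_iff_ne_zero.mpr hdS
  set C := S⁻¹ * B * S⁻¹ with hCdef
  have hSinvH : S⁻¹.IsHermitian := hS.1.inv
  have hC : C.PosSemidef := by
    have := hB.mul_mul_conjTranspose_same S⁻¹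
    rwa [hSinvH.eq] at this
  set μ := hC.1.eigenvalues with hμdef
  have hμ0 : ∀ i, 0 ≤ μ i := fun i => hC.eigenvalues_nonneg i
  have hdetC : C.det = ∏ i, μ i := by
    rw [hC.1.det_eq_prod_eigenvalues]; norm_num; rfl
  have hAB : A + B = S * (1 + C) * S := by
    rw [hCdef, mul_add, add_mul, mul_one, hSS]
    congr 1
    rw [← Matrix.mul_assoc, ← Matrix.mul_assoc, Matrix.mul_nonsing_inv S hUnit,
      Matrix.one_mul, Matrix.mul_assoc, Matrix.nonsing_inv_mul S hUnit, Matrix.mul_one]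
  have hBform : B = S * C * S := by
    rw [hCdef, ← Matrix.mul_assoc, ← Matrix.mul_assoc, Matrix.mul_nonsing_inv S hUnit,
      Matrix.one_mul, Matrix.mul_assoc, Matrix.nonsing_inv_mul S hUnit, Matrix.mul_one]
  have hdet1C : (1 + C).det = ∏ i, (1 + μ i) := by
    set U : Matrix (Fin n) (Fin n) ℝ := (hC.1.eigenvectorUnitary : Matrix (Fin n) (Fin n) ℝ) with hU
    have hspec := hC.1.spectral_theorem
    have hUU : U * star U = 1 := Matrix.mem_unitaryGroup_iff.mp hC.1.eigenvectorUnitary.2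
    have h1C : 1 + C = U * (1 + Matrix.diagonal μ) * star U := by
      rw [mul_add, add_mul, mul_one]
      rw [hUU]
      congr 1
    rw [h1C, Matrix.det_mul, Matrix.det_mul, mul_comm, ← mul_assoc, ← Matrix.det_mul,
      mul_eq_one_comm.mp hUU, Matrix.det_one, one_mul]
    have : (1 : Matrix (Fin n) (Fin n) ℝ) + Matrix.diagonal μ
        = Matrix.diagonal (fun i => 1 + μ i) := by
      rw [← Matrix.diagonal_one, Matrix.diagonal_add]
    rw [this, Matrix.det_diagonal]
  refine ⟨μ, hμ0, ?_, ?_⟩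
  · rw [hAB, Matrix.det_mul, Matrix.det_mul, mul_comm, ← mul_assoc, ← Matrix.det_mul, hSS,
      hdet1C, mul_comm]
  · rw [hBform, Matrix.det_mul, Matrix.det_mul, mul_comm, ← mul_assoc, ← Matrix.det_mul, hSS,
      hdetC]

theorem stmt_7 (n : ℕ) (hn : 0 < n) (A B : Matrix (Fin n) (Fin n) ℝ)
    (hA : A.PosSemidef) (hB : B.PosSemidef) :
    A.det ^ ((1 : ℝ) / n) + B.det ^ ((1 : ℝ) / n) ≤ (A + B).det ^ ((1 : ℝ) / n) := by
  have hp : (0:ℝ) < 1/n := by positivity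
  have hABdet : 0 ≤ (A + B).det := psd_det_nonneg (hA.add hB)
  by_cases hdA : A.det = 0
  · by_cases hdB : B.det = 0
    · rw [hdA, hdB, Real.zero_rpow hp.ne']
      norm_num
      exact Real.rpow_nonneg hABdet _
    · obtain ⟨μ, hμ0, hsum, _⟩ := key_decomp n B A hB hA hdB
      rw [hdA, Real.zero_rpow hp.ne', zero_add]
      apply Real.rpow_le_rpow (psd_det_nonneg hB) _ hp.le
      rw [add_comm A B, hsum]
      have hBpos : 0 < B.det := lt_of_le_of_ne (psd_det_nonneg hB) (Ne.symm hdB)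
      have h1 : (1:ℝ) ≤ ∏ i, (1 + μ i) := by
        calc (1:ℝ) = ∏ _i : Fin n, (1:ℝ) := by rw [Finset.prod_const_one]
          _ ≤ ∏ i, (1 + μ i) := Finset.prod_le_prod (fun i _ => zero_le_one)
              (fun i _ => by linarith [hμ0 i])
      nlinarith
  · obtain ⟨μ, hμ0, hsum, hBeq⟩ := key_decomp n A B hA hB hdA
    have hApos : 0 < A.det := lt_of_le_of_ne (psd_det_nonneg hA) (Ne.symm hdA)
    have e1 : (A.det * ∏ i, (1 + μ i)) ^ ((1:ℝ)/n)
        = A.det ^ ((1:ℝ)/n) * (∏ i, (1 + μ i)) ^ ((1:ℝ)/n) :=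
      Real.mul_rpow hApos.le (Finset.prod_nonneg fun i _ => by linarith [hμ0 i])
    have e2 : (A.det * ∏ i, μ i) ^ ((1:ℝ)/n)
        = A.det ^ ((1:ℝ)/n) * (∏ i, μ i) ^ ((1:ℝ)/n) :=
      Real.mul_rpow hApos.le (Finset.prod_nonneg fun i _ => hμ0 i)
    rw [hsum, hBeq, e1, e2]
    have hgm := gm_superadd n hn (fun _ => 1) μ (fun _ => zero_le_one) hμ0
    simp only [Finset.prod_const_one, Real.one_rpow] at hgm
    calc A.det ^ ((1:ℝ)/n) + A.det ^ ((1:ℝ)/n) * (∏ i, μ i) ^ ((1:ℝ)/n)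
        = A.det ^ ((1:ℝ)/n) * (1 + (∏ i, μ i) ^ ((1:ℝ)/n)) := by ring
      _ ≤ A.det ^ ((1:ℝ)/n) * (∏ i, (1 + μ i)) ^ ((1:ℝ)/n) := by
          apply mul_le_mul_of_nonneg_left hgm (Real.rpow_nonneg hApos.le _)
end

section
/- Let f and g be quadratic forms on ℝⁿ with g indefinite. If f(ξ) = 0 for every ξ ∈ ℝⁿ such that g(ξ) = 0, then there exists λ ∈ ℝ such that f = λ·g. -/
open QuadraticMap in
private lemma key_aux (n : ℕ) (f g : QuadraticForm ℝ (Fin n → ℝ))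
    (hvanish : ∀ ξ : Fin n → ℝ, g ξ = 0 → f ξ = 0)
    (x y : Fin n → ℝ) (hgy : g y ≠ 0)
    (hD : 0 < (polar g x y)^2 - 4 * g x * g y) :
    f x * g y = f y * g x := by
  set p := polar g x y with hp
  set D := p^2 - 4 * g x * g y with hDdef
  set s := Real.sqrt D with hsdef
  have hs : s^2 = D := Real.sq_sqrt hD.le
  have hspos : 0 < s := Real.sqrt_pos.mpr hD
  set u := (-p + s) / (2 * g y) with hu
  set v := (-p - s) / (2 * g y) with hv
  have hval : ∀ t : ℝ, g (x + t • y) = g x + t * p + t^2 * g y := by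
    intro t
    have h1 : g (x + t • y) = g x + g (t • y) + polar g x (t • y) := by
      rw [QuadraticMap.polar]; ring
    rw [h1, QuadraticMap.map_smul, QuadraticMap.polar_smul_right]
    simp [smul_eq_mul]; ring
  have hfval : ∀ t : ℝ, f (x + t • y) = f x + t * polar f x y + t^2 * f y := by
    intro t
    have h1 : f (x + t • y) = f x + f (t • y) + polar f x (t • y) := by
      rw [QuadraticMap.polar]; ring
    rw [h1, QuadraticMap.map_smul, QuadraticMap.polar_smul_right]
    simp [smul_eq_mul]; ring
  have hgu : g (x + u • y) = 0 := by
    rw [hval]; rw [hu]; field_simp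
    nlinarith [hs, sq_nonneg s]
  have hgv : g (x + v • y) = 0 := by
    rw [hval]; rw [hv]; field_simp
    nlinarith [hs, sq_nonneg s]
  have E1 : f x + u * polar f x y + u^2 * f y = 0 := by
    rw [← hfval]; exact hvanish _ hgu
  have E2 : f x + v * polar f x y + v^2 * f y = 0 := by
    rw [← hfval]; exact hvanish _ hgv
  have huv : u ≠ v := by
    intro h
    rw [hu, hv, div_eq_div_iff (by simpa using hgy) (by simpa using hgy)] at h
    have h2 : (2 : ℝ) * g y ≠ 0 := by simpa using hgy
    have := mul_right_cancel₀ h2 h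
    linarith
  have hsub : u - v ≠ 0 := sub_ne_zero.mpr huv
  have hsum : polar f x y + (u + v) * f y = 0 := by
    have h : (u - v) * (polar f x y + (u + v) * f y) = 0 := by
      linear_combination E1 - E2
    rcases mul_eq_zero.mp h with h | h
    · exact absurd h hsub
    · exact h
  have hfx : f x = u * v * f y := by linear_combination E1 - u * hsum
  have huvg : u * v * g y = g x := by
    have hs' : s^2 = p^2 - 4 * g x * g y := by rw [hs, hDdef]
    rw [hu, hv]; field_simp
    linear_combination (-1 : ℝ) * hs'
  calc f x * g y = u * v * f y * g y := by rw [hfx]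
    _ = f y * (u * v * g y) := by ring
    _ = f y * g x := by rw [huvg]

theorem stmt_8 (n : ℕ) (f g : QuadraticForm ℝ (Fin n → ℝ))
    (hpos : ∃ a, 0 < g a) (hneg : ∃ b, g b < 0)
    (hvanish : ∀ ξ : Fin n → ℝ, g ξ = 0 → f ξ = 0) :
    ∃ lam : ℝ, f = lam • g := by
  obtain ⟨a, ha⟩ := hpos
  obtain ⟨b, hb⟩ := hneg
  refine ⟨f b / g b, ?_⟩
  have hab : f a * g b = f b * g a := by
    apply key_aux n f g hvanish a b hb.ne
    nlinarith [sq_nonneg (QuadraticMap.polar g a b)]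
  ext x
  have hsmul : ((f b / g b) • g) x = f b / g b * g x := rfl
  rw [hsmul]
  rcases lt_trichotomy (g x) 0 with h | h | h
  · -- compare with a
    have hxa : f x * g a = f a * g x := by
      apply key_aux n f g hvanish x a ha.ne'
      nlinarith [sq_nonneg (QuadraticMap.polar g x a)]
    rw [div_mul_eq_mul_div, eq_div_iff hb.ne]
    have hz : (f x * g b - f b * g x) * g a = 0 := by
      linear_combination g b * hxa + g x * hab
    rcases mul_eq_zero.mp hz with h' | h'
    · linarith
    · exact absurd h' ha.ne'
  · rw [hvanish x h, h]; ring
  · have hxb : f x * g b = f b * g x := by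
      apply key_aux n f g hvanish x b hb.ne
      nlinarith [sq_nonneg (QuadraticMap.polar g x b)]
    rw [div_mul_eq_mul_div, eq_div_iff hb.ne]
    linarith [hxb]
end

section
/- If T is a d×d real symmetric positive semidefinite matrix, then its cofactor matrix cof(T) is also positive semidefinite. -/
open Matrix

/-- The cofactor matrix of a square matrix: the transpose of the adjugate. -/
def cofMatrix {n : Type*} [DecidableEq n] [Fintype n] {R : Type*} [CommRing R]
    (A : Matrix n n R) : Matrix n n R := (Matrix.adjugate A)ᵀ

lemma posDef_adjugate {d : ℕ} {T : Matrix (Fin d) (Fin d) ℝ} (hT : T.PosDef) :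
    (Matrix.adjugate T).PosDef := by
  have hdet : 0 < T.det := hT.det_pos
  have hinv : (T⁻¹).PosDef := hT.inv
  have h : Matrix.adjugate T = T.det • T⁻¹ := by
    rw [Matrix.inv_def, smul_smul, Ring.inverse_eq_inv, mul_inv_cancel₀ hdet.ne', one_smul]
  rw [h]
  refine PosDef.of_dotProduct_mulVec_pos ?_ (fun x hx => ?_)
  · show (T.det • T⁻¹)ᴴ = T.det • T⁻¹
    rw [conjTranspose_smul, hinv.1.eq, star_trivial]
  · rw [smul_mulVec, dotProduct_smul, smul_eq_mul]
    exact mul_pos hdet (hinv.dotProduct_mulVec_pos hx)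

theorem stmt_12 (d : ℕ) (T : Matrix (Fin d) (Fin d) ℝ) (hT : T.PosSemidef) :
    (cofMatrix T).PosSemidef := by
  have hsym : Tᵀ = T := hT.isHermitian
  have hcof : cofMatrix T = Matrix.adjugate T := by
    rw [cofMatrix, Matrix.adjugate_transpose, hsym]
  rw [hcof]
  refine PosSemidef.of_dotProduct_mulVec_nonneg ?_ ?_
  · show (Matrix.adjugate T)ᴴ = Matrix.adjugate T
    rw [conjTranspose_eq_transpose_of_trivial, Matrix.adjugate_transpose, hsym]
  · intro x
    have key : ∀ ε : ℝ, 0 < ε →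
        0 ≤ star x ⬝ᵥ (Matrix.adjugate (T + ε • 1)).mulVec x := by
      intro ε hε
      have hpd : (T + ε • 1).PosDef := by
        have : ((ε : ℝ) • (1 : Matrix (Fin d) (Fin d) ℝ)).PosDef := by
          have := Matrix.PosDef.diagonal (d := fun _ : Fin d => ε) (fun _ => hε)
          simpa [Matrix.smul_one_eq_diagonal] using this
        exact Matrix.PosDef.posSemidef_add hT this
      exact ((posDef_adjugate hpd).posSemidef).dotProduct_mulVec_nonneg x
    have hcont : Continuous fun ε : ℝ =>
        star x ⬝ᵥ (Matrix.adjugate (T + ε • 1)).mulVec x := by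
      apply Continuous.dotProduct continuous_const
      apply Continuous.matrix_mulVec _ continuous_const
      exact Continuous.matrix_adjugate (by continuity)
    have htend : Filter.Tendsto
        (fun ε : ℝ => star x ⬝ᵥ (Matrix.adjugate (T + ε • 1)).mulVec x)
        (nhdsWithin 0 (Set.Ioi 0)) (nhds (star x ⬝ᵥ (Matrix.adjugate T).mulVec x)) := by
      have := (hcont.tendsto 0).mono_left (nhdsWithin_le_nhds (s := Set.Ioi 0))
      simpa using this
    exact ge_of_tendsto htend (Filter.eventually_of_mem self_mem_nhdsWithin
      fun ε hε => key ε hε)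
end

section
/- Let T(y) be a 3×3 real symmetric matrix depending on y such that at some point y⁰ the entries satisfy t₁₁(y⁰)t₂₂(y⁰) − t₁₂(y⁰)² ≥ 0, and suppose t₁₁ is a quadratic form in y ∈ ℝ³ that is indefinite while t₂₂ is a quadratic form with t₁₁(y)t₂₂(y) − t₁₂(y)² ≥ 0 for all y. Then t₁₁(y) = 0 implies t₂₂(y) = 0 for every y ∈ ℝ³, and hence t₂₂ = λ²·t₁₁ for some λ ∈ ℝ. -/
open MvPolynomial

noncomputable def lineP (q : MvPolynomial (Fin 3) ℝ) (y v : Fin 3 → ℝ) : Polynomial ℝ :=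
  MvPolynomial.aeval (fun i => Polynomial.C (y i) + Polynomial.C (v i) * Polynomial.X) q

lemma eval_lineP (q : MvPolynomial (Fin 3) ℝ) (y v : Fin 3 → ℝ) (t : ℝ) :
    (lineP q y v).eval t = MvPolynomial.eval (fun i => y i + v i * t) q := by
  have := MvPolynomial.comp_aeval_apply (R := ℝ)
    (f := fun i => Polynomial.C (y i) + Polynomial.C (v i) * Polynomial.X)
    (Polynomial.aeval t) q
  rw [lineP, ← Polynomial.coe_aeval_eq_eval, this]
  simp only [map_add, Polynomial.aeval_C, Polynomial.aeval_X, map_mul]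
  rfl

lemma coeff_prod_nd {ι : Type*} (s : Finset ι) (f : ι → Polynomial ℝ) (d : ι → ℕ)
    (h : ∀ i ∈ s, (f i).natDegree ≤ d i) :
    (∏ i ∈ s, f i).coeff (∑ i ∈ s, d i) = ∏ i ∈ s, (f i).coeff (d i) := by
  classical
  induction s using Finset.induction_on with
  | empty => simp
  | insert a s hx ih =>
    rw [Finset.prod_insert hx, Finset.sum_insert hx, Finset.prod_insert hx,
      Polynomial.coeff_mul_add_eq_of_natDegree_le (h a (Finset.mem_insert_self a s))
        ((Polynomial.natDegree_prod_le _ _).trans (Finset.sum_le_sum fun i hi =>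
          h i (Finset.mem_insert_of_mem hi))),
      ih fun i hi => h i (Finset.mem_insert_of_mem hi)]

lemma support_degree_eq {q : MvPolynomial (Fin 3) ℝ} (hq : q.IsHomogeneous 2)
    {d : Fin 3 →₀ ℕ} (hd : d ∈ q.support) : ∑ i, d i = 2 := by
  have h1 : d.degree = 2 := by
    by_contra h
    exact (MvPolynomial.mem_support_iff.mp hd) (hq.coeff_eq_zero h)
  rw [← h1, Finsupp.degree]
  exact (Finset.sum_subset (Finset.subset_univ _) (fun i _ hi => by
    simpa using Finsupp.notMem_support_iff.mp hi)).symm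

lemma nd_lin (y v : ℝ) : (Polynomial.C y + Polynomial.C v * Polynomial.X).natDegree ≤ 1 := by
  apply (Polynomial.natDegree_add_le _ _).trans
  simp only [Polynomial.natDegree_C, max_le_iff]
  exact ⟨Nat.zero_le _, (Polynomial.natDegree_mul_le).trans (by simp [Polynomial.natDegree_C])⟩

lemma coeff1_lin (y v : ℝ) : (Polynomial.C y + Polynomial.C v * Polynomial.X).coeff 1 = v := by
  simp [Polynomial.coeff_C]

lemma coeff_pow_lin (y v : ℝ) (m : ℕ) :
    ((Polynomial.C y + Polynomial.C v * Polynomial.X) ^ m).coeff m = v ^ m := by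
  have := Polynomial.coeff_pow_of_natDegree_le (m := m) (nd_lin y v)
  simpa [coeff1_lin] using this

lemma natDegree_lineP {q : MvPolynomial (Fin 3) ℝ} (hq : q.IsHomogeneous 2) (y v : Fin 3 → ℝ) :
    (lineP q y v).natDegree ≤ 2 := by
  rw [lineP, MvPolynomial.aeval_def, MvPolynomial.eval₂_eq']
  apply Polynomial.natDegree_sum_le_of_forall_le
  intro d hd
  apply (Polynomial.natDegree_mul_le).trans
  rw [Polynomial.algebraMap_eq, Polynomial.natDegree_C, zero_add]
  apply (Polynomial.natDegree_prod_le _ _).trans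
  have h2 : ∀ i : Fin 3, ((Polynomial.C (y i) + Polynomial.C (v i) * Polynomial.X) ^ d i).natDegree ≤ d i :=
    fun i => (Polynomial.natDegree_pow_le).trans (by
      calc d i * (Polynomial.C (y i) + Polynomial.C (v i) * Polynomial.X).natDegree
          ≤ d i * 1 := Nat.mul_le_mul_left _ (nd_lin _ _)
        _ = d i := Nat.mul_one _)
  have hs := Finset.sum_le_sum (s := Finset.univ)
    (f := fun i => ((Polynomial.C (y i) + Polynomial.C (v i) * Polynomial.X) ^ d i).natDegree)
    (g := fun i => d i) (fun i _ => h2 i)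
  exact le_trans hs (le_of_eq (support_degree_eq hq hd))

lemma coeff2_lineP {q : MvPolynomial (Fin 3) ℝ} (hq : q.IsHomogeneous 2) (y v : Fin 3 → ℝ) :
    (lineP q y v).coeff 2 = MvPolynomial.eval v q := by
  rw [lineP, MvPolynomial.aeval_def, MvPolynomial.eval₂_eq', MvPolynomial.eval_eq',
    Polynomial.finset_sum_coeff]
  apply Finset.sum_congr rfl
  intro d hd
  have hdeg : ∀ i : Fin 3, ((Polynomial.C (y i) + Polynomial.C (v i) * Polynomial.X) ^ d i).natDegree ≤ d i :=
    fun i => (Polynomial.natDegree_pow_le).trans (by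
      calc d i * _ ≤ d i * 1 := Nat.mul_le_mul_left _ (nd_lin _ _)
        _ = d i := Nat.mul_one _)
  have hsum := support_degree_eq hq hd
  have hprod : ((∏ i, (Polynomial.C (y i) + Polynomial.C (v i) * Polynomial.X) ^ d i)).coeff 2
      = ∏ i, (v i) ^ d i := by
    rw [← hsum, coeff_prod_nd _ _ _ (fun i _ => hdeg i)]
    exact Finset.prod_congr rfl fun i _ => coeff_pow_lin _ _ _
  rw [Polynomial.algebraMap_eq, Polynomial.coeff_C_mul, hprod]

lemma eval_deg2 (P : Polynomial ℝ) (h : P.natDegree ≤ 2) (t : ℝ) :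
    P.eval t = P.coeff 0 + P.coeff 1 * t + P.coeff 2 * t ^ 2 := by
  have := Polynomial.eval_eq_sum_range' (n := 3) (lt_of_le_of_lt h (by norm_num)) t
  rw [this]
  simp [Finset.sum_range_succ]

lemma eval_deg1 (P : Polynomial ℝ) (h : P.natDegree ≤ 1) (t : ℝ) :
    P.eval t = P.coeff 0 + P.coeff 1 * t := by
  have := Polynomial.eval_eq_sum_range' (n := 2) (lt_of_le_of_lt h (by norm_num)) t
  rw [this]
  simp [Finset.sum_range_succ]

lemma factor_of_root (P : Polynomial ℝ) (n : ℕ) (hd : P.natDegree ≤ n + 1) (r : ℝ)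
    (h : P.eval r = 0) :
    ∃ Q : Polynomial ℝ, Q.natDegree ≤ n ∧ P = (Polynomial.X - Polynomial.C r) * Q := by
  obtain ⟨Q, hQ⟩ := (Polynomial.dvd_iff_isRoot.mpr h)
  rcases eq_or_ne Q 0 with h0 | h0
  · exact ⟨0, by simp, by simp [hQ, h0]⟩
  · refine ⟨Q, ?_, hQ⟩
    have hX : (Polynomial.X - Polynomial.C r) ≠ 0 := Polynomial.X_sub_C_ne_zero r
    have := Polynomial.natDegree_mul hX h0
    rw [← hQ, Polynomial.natDegree_X_sub_C] at this
    omega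

lemma limit_nonneg (P R : Polynomial ℝ) (h2 : P.natDegree ≤ 2) (h0 : P.coeff 0 = 0)
    (hc2 : 0 < P.coeff 2) (h : ∀ t, 0 < P.eval t → 0 ≤ R.eval t) : 0 ≤ R.eval 0 := by
  rcases le_or_gt 0 (P.coeff 1) with hB | hB
  · have hpos : ∀ t ∈ Set.Ioi (0 : ℝ), 0 ≤ R.eval t := by
      intro t ht
      apply h
      rw [eval_deg2 P h2, h0]
      have ht' : (0:ℝ) < t := ht
      nlinarith [mul_pos hc2 (mul_pos ht' ht'), mul_nonneg hB ht'.le]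
    have htend : Filter.Tendsto (fun t => R.eval t) (nhdsWithin 0 (Set.Ioi 0)) (nhds (R.eval 0)) :=
      (Polynomial.continuous R).continuousAt.continuousWithinAt
    exact ge_of_tendsto htend ((eventually_mem_nhdsWithin).mono hpos)
  · have hpos : ∀ t ∈ Set.Iio (0 : ℝ), 0 ≤ R.eval t := by
      intro t ht
      apply h
      rw [eval_deg2 P h2, h0]
      have ht' : t < 0 := ht
      nlinarith [mul_pos hc2 (mul_pos (neg_pos.mpr ht') (neg_pos.mpr ht')), mul_nonneg (le_of_lt (neg_pos.mpr hB)) (le_of_lt (neg_pos.mpr ht'))]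
    have htend : Filter.Tendsto (fun t => R.eval t) (nhdsWithin 0 (Set.Iio 0)) (nhds (R.eval 0)) :=
      (Polynomial.continuous R).continuousAt.continuousWithinAt
    exact ge_of_tendsto htend ((eventually_mem_nhdsWithin).mono hpos)

lemma part1 (t11 t12 t22 : MvPolynomial (Fin 3) ℝ)
    (h11 : t11.IsHomogeneous 2)
    (hpos : ∃ y : Fin 3 → ℝ, 0 < eval y t11) (hneg : ∃ y : Fin 3 → ℝ, eval y t11 < 0)
    (hminor : ∀ y : Fin 3 → ℝ, 0 ≤ eval y t11 * eval y t22 - (eval y t12) ^ 2) :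
    ∀ y : Fin 3 → ℝ, eval y t11 = 0 → eval y t22 = 0 := by
  intro y hy
  obtain ⟨a, ha⟩ := hpos
  obtain ⟨b, hb⟩ := hneg
  have key : ∀ v : Fin 3 → ℝ, (lineP t11 y v).coeff 0 = 0 := by
    intro v
    have he : (fun i => y i + v i * 0) = y := by funext i; ring
    rw [Polynomial.coeff_zero_eq_eval_zero, eval_lineP, he, hy]
  have hR0 : ∀ v : Fin 3 → ℝ, (lineP t22 y v).eval 0 = eval y t22 := by
    intro v
    have he : (fun i => y i + v i * 0) = y := by funext i; ring
    rw [eval_lineP, he]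
  -- lower bound via a
  have hlow : 0 ≤ eval y t22 := by
    have := limit_nonneg (lineP t11 y a) (lineP t22 y a) (natDegree_lineP h11 y a) (key a)
      (by rw [coeff2_lineP h11]; exact ha) ?_
    · rwa [hR0 a] at this
    · intro t ht
      rw [eval_lineP] at ht ⊢
      nlinarith [hminor (fun i => y i + a i * t), sq_nonneg (eval (fun i => y i + a i * t) t12),
        mul_pos ht ht]
  -- upper bound via b
  have hupp : eval y t22 ≤ 0 := by
    have := limit_nonneg (-(lineP t11 y b)) (-(lineP t22 y b))
      (by rw [Polynomial.natDegree_neg]; exact natDegree_lineP h11 y b)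
      (by rw [Polynomial.coeff_neg, key b, neg_zero])
      (by rw [Polynomial.coeff_neg, coeff2_lineP h11]; linarith) ?_
    · rw [Polynomial.eval_neg, hR0 b] at this
      linarith
    · intro t ht
      rw [Polynomial.eval_neg, eval_lineP] at ht
      rw [Polynomial.eval_neg, eval_lineP]
      have hneg' : eval (fun i => y i + b i * t) t11 < 0 := by linarith
      nlinarith [hminor (fun i => y i + b i * t), sq_nonneg (eval (fun i => y i + b i * t) t12)]
  linarith

lemma line_lemma_s15 (P R : Polynomial ℝ) (hP : P.natDegree ≤ 2) (hR : R.natDegree ≤ 2)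
    (hsign : ∀ t : ℝ, 0 ≤ P.eval t * R.eval t)
    (hroot : ∀ t : ℝ, P.eval t = 0 → R.eval t = 0)
    (h0 : 0 < P.eval 0) (h1 : P.eval 1 < 0) :
    ∃ l : ℝ, ∀ t : ℝ, R.eval t = l * P.eval t := by
  -- IVT root
  obtain ⟨t0, ht0mem, ht0⟩ : ∃ t0 ∈ Set.Icc (0:ℝ) 1, P.eval t0 = 0 := by
    have hc : ContinuousOn (fun t => P.eval t) (Set.Icc (0:ℝ) 1) :=
      (Polynomial.continuous P).continuousOn
    have := intermediate_value_Icc' (by norm_num : (0:ℝ) ≤ 1) hc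
      (Set.mem_Icc.mpr ⟨le_of_lt h1, le_of_lt h0⟩)
    obtain ⟨t0, ht0mem, ht0⟩ := this
    exact ⟨t0, ht0mem, ht0⟩
  have ht0pos : 0 < t0 := lt_of_le_of_ne ht0mem.1 (fun h => by rw [← h] at ht0; linarith)
  have ht0lt : t0 < 1 := lt_of_le_of_ne ht0mem.2 (fun h => by rw [h] at ht0; linarith)
  obtain ⟨Q, hQdeg, hPQ⟩ := factor_of_root P 1 hP t0 ht0
  obtain ⟨S, hSdeg, hRS⟩ := factor_of_root R 1 hR t0 (hroot t0 ht0)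
  have hPev : ∀ t : ℝ, P.eval t = (t - t0) * Q.eval t := by
    intro t; rw [hPQ]; simp
  have hRev : ∀ t : ℝ, R.eval t = (t - t0) * S.eval t := by
    intro t; rw [hRS]; simp
  have hQ0 : Q.eval 0 < 0 := by
    have := h0; rw [hPev 0] at this; nlinarith
  have hQ1 : Q.eval 1 < 0 := by
    have := h1; rw [hPev 1] at this; nlinarith
  have hQe := eval_deg1 Q hQdeg
  have hSe := eval_deg1 S hSdeg
  rcases eq_or_ne (Q.coeff 1) 0 with hu | hu
  · -- Q constant
    set d := Q.coeff 0 with hd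
    have hQc : ∀ t : ℝ, Q.eval t = d := by intro t; rw [hQe t, hu]; ring
    have hdneg : d < 0 := by have := hQ0; rwa [hQc 0] at this
    -- S.eval t ≤ 0 for t ≠ t0
    have hSle : ∀ t : ℝ, t ≠ t0 → S.eval t ≤ 0 := by
      intro t ht
      have := hsign t
      rw [hPev t, hRev t, hQc t] at this
      have htt : 0 < (t - t0) * (t - t0) := mul_self_pos.mpr (sub_ne_zero_of_ne ht)
      by_contra hS
      push_neg at hS
      nlinarith [mul_neg_of_neg_of_pos hdneg (mul_pos htt hS)]
    -- S has zero slope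
    have hs1 : S.coeff 1 = 0 := by
      by_contra hs1
      set s1 := S.coeff 1
      set s0 := S.coeff 0
      have key : ∀ c : ℝ, 0 < c → (s0 + s1 * ((c - s0) / s1) = c) := by
        intro c _; field_simp; ring
      have hta : (1 - s0) / s1 ≠ t0 ∨ (2 - s0) / s1 ≠ t0 := by
        by_contra hc
        push_neg at hc
        have := hc.1.trans hc.2.symm
        have hne : (1 - s0) / s1 ≠ (2 - s0) / s1 := by
          intro h
          field_simp at h; linarith
        exact hne this
      rcases hta with h' | h'
      · have := hSle _ h'
        rw [hSe] at this
        have := key 1 one_pos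
        linarith
      · have := hSle _ h'
        rw [hSe] at this
        have := key 2 two_pos
        linarith
    set s0 := S.coeff 0
    refine ⟨s0 / d, fun t => ?_⟩
    have hdne : d ≠ 0 := ne_of_lt hdneg
    rw [hRev t, hPev t, hSe t, hs1, hQc t]
    field_simp
    ring
  · -- Q linear with root t1
    set u := Q.coeff 1 with hu'
    set q0 := Q.coeff 0 with hq0
    set t1 := -q0 / u with ht1
    have hQt : ∀ t : ℝ, Q.eval t = u * (t - t1) := by
      intro t; rw [hQe t, ht1]; field_simp; ring
    have hPt1 : P.eval t1 = 0 := by rw [hPev t1, hQt t1]; ring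
    rcases eq_or_ne t1 t0 with he | he
    · exfalso
      have hp0 : P.eval 0 = u * t0 * t0 := by rw [hPev 0, hQt 0, he]; ring
      have hp1 : P.eval 1 = u * (1 - t0) * (1 - t0) := by rw [hPev 1, hQt 1, he]; ring
      rw [hp0] at h0; rw [hp1] at h1
      have h2 : 0 < t0 * t0 := mul_pos ht0pos ht0pos
      have h3 : 0 < (1 - t0) * (1 - t0) := mul_pos (by linarith) (by linarith)
      have hupos : 0 < u := by
        by_contra hc; push_neg at hc
        nlinarith [mul_nonneg (neg_nonneg.mpr hc) h2.le]
      nlinarith [mul_pos hupos h3]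
    · have hRt1 : R.eval t1 = 0 := hroot t1 hPt1
      have hSt1 : S.eval t1 = 0 := by
        rw [hRev t1] at hRt1
        rcases mul_eq_zero.mp hRt1 with h | h
        · exact absurd (by linarith : t1 = t0) he
        · exact h
      set s1 := S.coeff 1 with hs1'
      have hs0 : S.coeff 0 = -s1 * t1 := by
        have := hSe t1; rw [hSt1] at this; linarith
      have hSt : ∀ t : ℝ, S.eval t = s1 * (t - t1) := by
        intro t; rw [hSe t, hs0]; ring
      refine ⟨s1 / u, fun t => ?_⟩
      rw [hRev t, hPev t, hSt t, hQt t]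
      field_simp

theorem stmt_15 (t11 t12 t22 : MvPolynomial (Fin 3) ℝ)
    (h11 : t11.IsHomogeneous 2) (h12 : t12.IsHomogeneous 2) (h22 : t22.IsHomogeneous 2)
    (hpos : ∃ y : Fin 3 → ℝ, 0 < eval y t11) (hneg : ∃ y : Fin 3 → ℝ, eval y t11 < 0)
    (hy0 : ∃ y0 : Fin 3 → ℝ, 0 ≤ eval y0 t11 * eval y0 t22 - (eval y0 t12) ^ 2)
    (hminor : ∀ y : Fin 3 → ℝ, 0 ≤ eval y t11 * eval y t22 - (eval y t12) ^ 2) :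
    (∀ y : Fin 3 → ℝ, eval y t11 = 0 → eval y t22 = 0) ∧
    ∃ lam : ℝ, t22 = C (lam ^ 2) * t11 := by
  have hP1 := part1 t11 t12 t22 h11 hpos hneg hminor
  refine ⟨hP1, ?_⟩
  obtain ⟨a, ha⟩ := hpos
  obtain ⟨b, hb⟩ := hneg
  have hline : ∀ x z : Fin 3 → ℝ, 0 < eval x t11 → eval z t11 < 0 →
      ∃ l : ℝ, eval x t22 = l * eval x t11 ∧ eval z t22 = l * eval z t11 := by
    intro x z hx hz
    set v : Fin 3 → ℝ := fun i => z i - x i with hv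
    have hpt0 : (fun i => x i + v i * 0) = x := by funext i; simp
    have hpt1 : (fun i => x i + v i * 1) = z := by funext i; simp [hv]
    have h0' : 0 < (lineP t11 x v).eval 0 := by rw [eval_lineP, hpt0]; exact hx
    have h1' : (lineP t11 x v).eval 1 < 0 := by rw [eval_lineP, hpt1]; exact hz
    obtain ⟨l, hl⟩ := line_lemma_s15 (lineP t11 x v) (lineP t22 x v)
      (natDegree_lineP h11 x v) (natDegree_lineP h22 x v)
      (by
        intro t
        rw [eval_lineP, eval_lineP]
        nlinarith [hminor (fun i => x i + v i * t), sq_nonneg (eval (fun i => x i + v i * t) t12)])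
      (by
        intro t h
        rw [eval_lineP] at h ⊢
        exact hP1 _ h)
      h0' h1'
    have e0 := hl 0
    have e1 := hl 1
    rw [eval_lineP, eval_lineP, hpt0] at e0
    rw [eval_lineP, eval_lineP, hpt1] at e1
    exact ⟨l, e0, e1⟩
  obtain ⟨c, hca, hcb⟩ := hline a b ha hb
  have hane : eval a t11 ≠ 0 := ne_of_gt ha
  have hbne : eval b t11 ≠ 0 := ne_of_lt hb
  have hall : ∀ y : Fin 3 → ℝ, eval y t22 = c * eval y t11 := by
    intro y
    rcases lt_trichotomy (eval y t11) 0 with h | h | h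
    · obtain ⟨l, hla, hly⟩ := hline a y ha h
      have : l = c := by
        have := hla.symm.trans hca
        exact mul_right_cancel₀ hane this
      rw [hly, this]
    · rw [hP1 y h, h, mul_zero]
    · obtain ⟨l, hly, hlb⟩ := hline y b h hb
      have : l = c := by
        have := hlb.symm.trans hcb
        exact mul_right_cancel₀ hbne this
      rw [hly, this]
  have h22a : 0 ≤ eval a t22 := by
    nlinarith [hminor a, sq_nonneg (eval a t12)]
  have hc0 : 0 ≤ c := by
    by_contra hc
    push_neg at hc
    nlinarith [hca]
  refine ⟨Real.sqrt c, ?_⟩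
  have hsq : Real.sqrt c ^ 2 = c := Real.sq_sqrt hc0
  rw [hsq]
  apply MvPolynomial.funext
  intro x
  rw [hall x]
  simp
end

section
/- Let H(y) be a 3×3 symmetric matrix of quadratic forms in y ∈ ℝ³, positive semidefinite for each y, whose diagonal entries satisfy h_{ii}(y) = a_{ii}·s_i(y)² for linear forms s_i and constants a_{ii} ≥ 0. Then each off-diagonal entry satisfies h_{ij}(y) = a_{ij}·s_i(y)·s_j(y) for some constants a_{ij}. -/
open MvPolynomial Matrix

lemma degOne (d : Fin 3 →₀ ℕ) (h : d.degree = 1) : ∃ k, d = Finsupp.single k 1 := by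
  have h0 : d ≠ 0 := by
    intro h'; rw [h', map_zero] at h; exact one_ne_zero h.symm
  obtain ⟨k, hk⟩ := Finsupp.ne_iff.mp h0
  simp only [Finsupp.coe_zero, Pi.zero_apply] at hk
  have hdk1 : d k = 1 := le_antisymm (h ▸ Finsupp.le_degree k d) (Nat.one_le_iff_ne_zero.mpr hk)
  refine ⟨k, ?_⟩
  ext j
  rcases eq_or_ne j k with rfl | hj
  · simp [hdk1]
  · have hj0 : d j = 0 := by
      by_contra hj0
      have h2 : 2 ≤ d.degree := by
        have hks : k ∈ d.support := Finsupp.mem_support_iff.mpr hk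
        have hjs : j ∈ d.support := Finsupp.mem_support_iff.mpr hj0
        calc 2 = 1 + 1 := rfl
        _ ≤ d j + d k := add_le_add (Nat.one_le_iff_ne_zero.mpr hj0) (Nat.one_le_iff_ne_zero.mpr hk)
        _ ≤ ∑ i ∈ d.support, d i := Finset.add_le_sum (fun i _ => Nat.zero_le _) hjs hks hj
        _ = d.degree := rfl
      omega
    simp [hj0, Finsupp.single_apply, (Ne.symm hj)]

lemma homRep (p : MvPolynomial (Fin 3) ℝ) (hp : p.IsHomogeneous 1) :
    p = ∑ k : Fin 3, C (coeff (Finsupp.single k 1) p) * X k := by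
  apply MvPolynomial.ext
  intro d
  rw [coeff_sum]
  simp only [coeff_C_mul, coeff_X']
  by_cases hd : d.degree = 1
  · obtain ⟨k, rfl⟩ := degOne d hd
    rw [Finset.sum_eq_single k]
    · simp
    · intro i _ hik
      rw [if_neg, mul_zero]
      intro hcontra
      exact hik (by simpa using (Finsupp.single_left_inj one_ne_zero).mp hcontra)
    · intro h; exact absurd (Finset.mem_univ k) h
  · rw [hp.coeff_eq_zero hd]
    rw [Finset.sum_eq_zero]
    intro i _
    rw [if_neg, mul_zero]
    intro hcontra
    apply hd
    rw [← hcontra]; simp [Finsupp.degree_single, Finsupp.support_single_ne_zero _ one_ne_zero]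

lemma evalLin (p : MvPolynomial (Fin 3) ℝ) (hp : p.IsHomogeneous 1) (y z : Fin 3 → ℝ) (t : ℝ) :
    eval (fun k => y k + t * z k) p = eval y p + t * eval z p := by
  have h := homRep p hp
  rw [h]
  simp only [map_sum, _root_.map_mul, eval_C, eval_X]
  rw [Finset.mul_sum, ← Finset.sum_add_distrib]
  exact Finset.sum_congr rfl (fun k _ => by ring)

lemma evalAeval (u : Fin 3 → MvPolynomial (Fin 3) ℝ) (y : Fin 3 → ℝ) (q : MvPolynomial (Fin 3) ℝ) :
    eval y (aeval u q) = eval (fun k => eval y (u k)) q := by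
  induction q using MvPolynomial.induction_on with
  | C a => simp
  | add p q hp hq => rw [map_add, map_add, map_add, hp, hq]
  | mul_X p i hp => rw [_root_.map_mul, aeval_X, _root_.map_mul, _root_.map_mul, hp, eval_X]

lemma XDvdAux (m : Fin 3) (q : MvPolynomial (Fin 3) ℝ) :
    X m ∣ q - aeval (fun k => if k = m then 0 else X k) q := by
  induction q using MvPolynomial.induction_on with
  | C a => simp
  | add p q hp hq =>
    have h : p + q - aeval (fun k => if k = m then 0 else X k) (p + q)
        = (p - aeval (fun k => if k = m then 0 else X k) p)
          + (q - aeval (fun k => if k = m then 0 else X k) q) := by rw [map_add]; ring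
    rw [h]; exact dvd_add hp hq
  | mul_X p i hp =>
    rcases eq_or_ne i m with rfl | him
    · have h : p * X i - aeval (fun k => if k = i then 0 else X k) (p * X i) = p * X i := by
        rw [_root_.map_mul, aeval_X, if_pos rfl, mul_zero, sub_zero]
      rw [h]; exact Dvd.intro_left p rfl
    · have h : p * X i - aeval (fun k => if k = m then 0 else X k) (p * X i)
          = (p - aeval (fun k => if k = m then 0 else X k) p) * X i := by
        rw [_root_.map_mul, aeval_X, if_neg him]; ring
      rw [h]; exact hp.mul_right _

lemma XDvd (m : Fin 3) (q : MvPolynomial (Fin 3) ℝ) (h : ∀ y, y m = 0 → eval y q = 0) :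
    X m ∣ q := by
  have h0 : aeval (fun k => if k = m then 0 else (X k : MvPolynomial (Fin 3) ℝ)) q = 0 := by
    refine MvPolynomial.funext fun y => ?_
    rw [evalAeval, map_zero]
    apply h
    simp
  have hdvd := XDvdAux m q
  rwa [h0, sub_zero] at hdvd

lemma linDvd (s p : MvPolynomial (Fin 3) ℝ) (hs : s.IsHomogeneous 1) (hs0 : s ≠ 0)
    (hvan : ∀ y, eval y s = 0 → eval y p = 0) : s ∣ p := by
  have hex : ∃ m, coeff (Finsupp.single m 1) s ≠ 0 := by
    by_contra hc
    push_neg at hc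
    apply hs0
    rw [homRep s hs]
    simp [hc]
  obtain ⟨m, hm⟩ := hex
  set c := coeff (Finsupp.single m 1) s with hc
  set r : MvPolynomial (Fin 3) ℝ :=
    ∑ k ∈ Finset.univ.erase m, C (coeff (Finsupp.single k 1) s) * X k with hr
  have hsrep : s = C c * X m + r := by
    conv_lhs => rw [homRep s hs]
    rw [← Finset.add_sum_erase _ _ (Finset.mem_univ m)]
  set u : Fin 3 → MvPolynomial (Fin 3) ℝ :=
    fun k => if k = m then C c⁻¹ * (X m - r) else X k with hu
  set v : Fin 3 → MvPolynomial (Fin 3) ℝ := fun k => if k = m then s else X k with hv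
  have hvr : aeval v r = r := by
    rw [hr, map_sum]
    refine Finset.sum_congr rfl fun k hk => ?_
    rw [_root_.map_mul, aeval_C, aeval_X, hv]
    simp [Finset.ne_of_mem_erase hk]
  have hur : aeval u r = r := by
    rw [hr, map_sum]
    refine Finset.sum_congr rfl fun k hk => ?_
    rw [_root_.map_mul, aeval_C, aeval_X, hu]
    simp [Finset.ne_of_mem_erase hk]
  have hcc : (C c : MvPolynomial (Fin 3) ℝ) * C c⁻¹ = 1 := by
    rw [← C_mul, mul_inv_cancel₀ hm, C_1]
  have hum : aeval u ((X m : MvPolynomial (Fin 3) ℝ)) = C c⁻¹ * (X m - r) := by rw [aeval_X]; simp [hu]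
  have hvm : aeval v ((X m : MvPolynomial (Fin 3) ℝ)) = s := by rw [aeval_X]; simp [hv]
  have hus : aeval u s = X m := by
    rw [hsrep, map_add, _root_.map_mul, aeval_C, hum, hur]
    simp only [MvPolynomial.algebraMap_eq]
    rw [← mul_assoc, hcc, one_mul]
    ring
  have hvu : ∀ q, aeval v (aeval u q) = q := by
    intro q
    have hcomp : (aeval v).comp (aeval u) = AlgHom.id ℝ (MvPolynomial (Fin 3) ℝ) := by
      apply MvPolynomial.algHom_ext
      intro k
      rcases eq_or_ne k m with h1 | hk
      · rw [h1, AlgHom.comp_apply, AlgHom.id_apply, aeval_X]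
        have hukm : u m = C c⁻¹ * (X m - r) := by simp [hu]
        rw [hukm, _root_.map_mul, map_sub, aeval_C, hvm, hvr]
        simp only [MvPolynomial.algebraMap_eq]
        have hsr : s - r = C c * X m := by rw [hsrep]; ring
        rw [hsr, ← mul_assoc, ← C_mul, inv_mul_cancel₀ hm, C_1, one_mul]
      · simp [hu, hv, hk]
    calc aeval v (aeval u q) = ((aeval v).comp (aeval u)) q := rfl
    _ = q := by rw [hcomp]; rfl
  have hXdvd : X m ∣ aeval u p := by
    apply XDvd
    intro y hy
    rw [evalAeval]
    apply hvan
    have : eval (fun k => eval y (u k)) s = eval y (aeval u s) := (evalAeval u y s).symm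
    rw [this, hus, eval_X, hy]
  obtain ⟨q, hq⟩ := hXdvd
  refine ⟨aeval v q, ?_⟩
  calc p = aeval v (aeval u p) := (hvu p).symm
  _ = aeval v (X m * q) := by rw [hq]
  _ = s * aeval v q := by rw [_root_.map_mul, aeval_X, hv]; simp

lemma constQuot (m q : MvPolynomial (Fin 3) ℝ) (hm : m.IsHomogeneous 2) (hm0 : m ≠ 0)
    (hmq : (m * q).IsHomogeneous 2) : q = C (coeff 0 q) := by
  have hcomp : ∀ k, k ≠ 0 → homogeneousComponent k q = 0 := by
    intro k hk
    rcases le_or_gt k q.totalDegree with hkle | hkgt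
    · have key : m * homogeneousComponent k q = homogeneousComponent (2 + k) (m * q) := by
        conv_rhs => rw [← sum_homogeneousComponent q, Finset.mul_sum, map_sum]
        rw [Finset.sum_eq_single k]
        · rw [homogeneousComponent_of_mem
            (hm.mul (homogeneousComponent_isHomogeneous k q)), if_pos rfl]
        · intro i _ hik
          rw [homogeneousComponent_of_mem
            (hm.mul (homogeneousComponent_isHomogeneous i q)), if_neg (by omega)]
        · intro hmem
          exact absurd (Finset.mem_range.mpr (by omega)) hmem
      have hz : homogeneousComponent (2 + k) (m * q) = 0 := by
        rw [homogeneousComponent_of_mem hmq, if_neg (by omega)]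
      rw [hz] at key
      rcases mul_eq_zero.mp key with h | h
      · exact absurd h hm0
      · exact h
    · exact homogeneousComponent_eq_zero k q hkgt
  have hq : homogeneousComponent 0 q = q := by
    have := sum_homogeneousComponent q
    rw [Finset.sum_eq_single 0] at this
    · exact this
    · intro i _ hi; exact hcomp i hi
    · intro h; exact absurd (Finset.mem_range.mpr (by omega)) h
  calc q = homogeneousComponent 0 q := hq.symm
  _ = C (coeff 0 q) := homogeneousComponent_zero q

lemma psdEntry (M : Matrix (Fin 3) (Fin 3) ℝ) (hM : M.PosSemidef) (hsym : M.IsSymm) (i j : Fin 3) :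
    (M i j) ^ 2 ≤ M i i * M j j := by
  rcases eq_or_ne i j with rfl | hij
  · have h := hM.dotProduct_mulVec_nonneg (Pi.single i 1)
    nlinarith [hM.dotProduct_mulVec_nonneg (Pi.single i 1)]
  · have key : ∀ t : ℝ, 0 ≤ M i i * (t * t) + (2 * M i j) * t + M j j := by
      intro t
      have h := hM.dotProduct_mulVec_nonneg (Pi.single i t + Pi.single j 1)
      simp only [star_trivial] at h
      rw [Matrix.mulVec_add, add_dotProduct, dotProduct_add, dotProduct_add,
        single_dotProduct, single_dotProduct, single_dotProduct,
        single_dotProduct, Matrix.mulVec_single, Matrix.mulVec_single] at h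
      simp only [Pi.add_apply, mul_one, Pi.smul_apply, Matrix.col_apply, op_smul_eq_mul, one_mul] at h
      have hji : M j i = M i j := hsym.apply i j
      rw [hji] at h
      ring_nf at h ⊢
      linarith [h]
    have hd := discrim_le_zero key
    rw [discrim] at hd
    nlinarith

theorem stmt_17 (H : Matrix (Fin 3) (Fin 3) (MvPolynomial (Fin 3) ℝ))
    (hsym : H.IsSymm) (hhom : ∀ i j, (H i j).IsHomogeneous 2)
    (hpsd : ∀ y : Fin 3 → ℝ, (H.map (eval y)).PosSemidef)
    (s : Fin 3 → MvPolynomial (Fin 3) ℝ) (hs : ∀ i, (s i).IsHomogeneous 1)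
    (a : Fin 3 → ℝ) (ha : ∀ i, 0 ≤ a i)
    (hdiag : ∀ i, H i i = C (a i) * (s i) ^ 2) :
    ∃ b : Fin 3 → Fin 3 → ℝ, ∀ i j, i ≠ j → H i j = C (b i j) * (s i * s j) := by
  have hentry : ∀ (y : Fin 3 → ℝ) i j,
      (eval y (H i j))^2 ≤ eval y (H i i) * eval y (H j j) := by
    intro y i j
    have hsym' : (H.map (eval y)).IsSymm := by
      show (H.map (eval y))ᵀ = H.map (eval y)
      rw [← Matrix.transpose_map, hsym]
    have h := psdEntry (H.map (eval y)) (hpsd y) hsym' i j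
    simpa [Matrix.map_apply] using h
  have key : ∀ i j, ∃ c, i ≠ j → H i j = C c * (s i * s j) := by
    intro i j
    by_cases hdi : ∀ y, eval y (H i i) = 0
    · refine ⟨0, fun _ => ?_⟩
      rw [C_0, zero_mul]
      refine MvPolynomial.funext fun y => ?_
      rw [map_zero]
      have h1 := hentry y i j
      rw [hdi y, zero_mul] at h1
      have h2 : (eval y (H i j))^2 = 0 := le_antisymm h1 (sq_nonneg _)
      exact pow_eq_zero_iff two_ne_zero |>.mp h2
    by_cases hdj : ∀ y, eval y (H j j) = 0
    · refine ⟨0, fun _ => ?_⟩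
      rw [C_0, zero_mul]
      refine MvPolynomial.funext fun y => ?_
      rw [map_zero]
      have h1 := hentry y i j
      rw [hdj y, mul_zero] at h1
      have h2 : (eval y (H i j))^2 = 0 := le_antisymm h1 (sq_nonneg _)
      exact pow_eq_zero_iff two_ne_zero |>.mp h2
    push_neg at hdi hdj
    have hsi0 : s i ≠ 0 := by
      intro h
      obtain ⟨y, hy⟩ := hdi
      exact hy (by rw [hdiag i, h]; simp)
    have hsj0 : s j ≠ 0 := by
      intro h
      obtain ⟨y, hy⟩ := hdj
      exact hy (by rw [hdiag j, h]; simp)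
    have hb : ∀ y, (eval y (H i j))^2
        ≤ (a i * a j) * ((eval y (s i))^2 * (eval y (s j))^2) := by
      intro y
      have h1 := hentry y i j
      rw [hdiag i, hdiag j] at h1
      simp only [_root_.map_mul, map_pow, eval_C] at h1
      nlinarith [h1]
    have hvani : ∀ y, eval y (s i) = 0 → eval y (H i j) = 0 := by
      intro y hy
      have h1 := hb y
      rw [hy] at h1
      have h2 : (eval y (H i j))^2 = 0 := le_antisymm (by nlinarith [h1]) (sq_nonneg _)
      exact pow_eq_zero_iff two_ne_zero |>.mp h2
    obtain ⟨l, hl⟩ := linDvd (s i) (H i j) (hs i) hsi0 hvani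
    have hprod : ∀ y, 0 ≤ ((a i * a j) * (eval y (s j))^2 - (eval y l)^2) * (eval y (s i))^2 := by
      intro y
      have h1 := hb y
      rw [hl] at h1
      simp only [_root_.map_mul] at h1
      nlinarith [h1]
    have hzex : ∃ z, eval z (s i) ≠ 0 := by
      by_contra hc
      push_neg at hc
      exact hsi0 (MvPolynomial.funext fun y => by rw [hc y, map_zero])
    obtain ⟨z, hz⟩ := hzex
    have hbound : ∀ y, (eval y l)^2 ≤ (a i * a j) * (eval y (s j))^2 := by
      intro y
      set g : ℝ → ℝ := fun t =>
        (a i * a j) * (eval (fun k => y k + t * z k) (s j))^2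
          - (eval (fun k => y k + t * z k) l)^2 with hgdef
      have hmapcont : Continuous (fun t : ℝ => (fun k => y k + t * z k : Fin 3 → ℝ)) := by
        apply continuous_pi
        intro k
        continuity
      have hcont : Continuous g := by
        apply Continuous.sub
        · exact continuous_const.mul (((MvPolynomial.continuous_eval (s j)).comp hmapcont).pow 2)
        · exact ((MvPolynomial.continuous_eval l).comp hmapcont).pow 2
      have hge : ∀ t : ℝ, eval y (s i) + t * eval z (s i) ≠ 0 → 0 ≤ g t := by
        intro t ht
        have h1 := hprod (fun k => y k + t * z k)
        rw [evalLin (s i) (hs i) y z t] at h1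
        have h2 : 0 < (eval y (s i) + t * eval z (s i))^2 := by positivity
        have h3 : 0 ≤ ((a i * a j) * (eval (fun k => y k + t * z k) (s j))^2
            - (eval (fun k => y k + t * z k) l)^2) := by nlinarith [h1, h2]
        simpa [hgdef] using h3
      set t₀ : ℝ := -(eval y (s i)) / (eval z (s i)) with ht0
      have hne : ∀ t : ℝ, t ≠ t₀ → eval y (s i) + t * eval z (s i) ≠ 0 := by
        intro t ht hc
        apply ht
        rw [ht0]
        field_simp
        linarith [hc]
      have hev : ∀ᶠ t in nhdsWithin (0:ℝ) {0}ᶜ, 0 ≤ g t := by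
        rcases eq_or_ne t₀ 0 with h0 | h0
        · filter_upwards [self_mem_nhdsWithin] with t ht
          exact hge t (hne t (by rw [h0]; exact ht))
        · have hmem : {t₀}ᶜ ∈ nhdsWithin (0:ℝ) {0}ᶜ :=
            mem_nhdsWithin_of_mem_nhds (isOpen_compl_singleton.mem_nhds (by simpa using h0.symm))
          filter_upwards [hmem] with t ht
          exact hge t (hne t ht)
      have hlim : Filter.Tendsto g (nhdsWithin (0:ℝ) {0}ᶜ) (nhds (g 0)) :=
        (hcont.tendsto 0).mono_left nhdsWithin_le_nhds
      have h0 : 0 ≤ g 0 := ge_of_tendsto hlim hev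
      have hgy : g 0 = (a i * a j) * (eval y (s j))^2 - (eval y l)^2 := by
        have hy0 : (fun k => y k + 0 * z k) = y := by funext k; ring
        rw [hgdef]
        simp only [hy0]
      rw [hgy] at h0
      linarith [h0]
    have hvanj : ∀ y, eval y (s j) = 0 → eval y l = 0 := by
      intro y hy
      have h1 := hbound y
      rw [hy] at h1
      have h2 : (eval y l)^2 = 0 := le_antisymm (by nlinarith [h1]) (sq_nonneg _)
      exact pow_eq_zero_iff two_ne_zero |>.mp h2
    obtain ⟨q, hq⟩ := linDvd (s j) l (hs j) hsj0 hvanj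
    have hfac : H i j = (s i * s j) * q := by rw [hl, hq]; ring
    have hhom2 : ((s i * s j) * q).IsHomogeneous 2 := hfac ▸ hhom i j
    have hconst := constQuot (s i * s j) q ((hs i).mul (hs j)) (mul_ne_zero hsi0 hsj0) hhom2
    refine ⟨coeff 0 q, fun _ => ?_⟩
    rw [hfac]
    conv_lhs => rw [hconst]
    ring
  choose b hbb using key
  exact ⟨b, hbb⟩
end
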